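/- arXiv:2107.01465 — 5 statements merged into one kernel-verified Lean document; each statement's English description precedes it below -/
import Mathlib

section
/- Let k ∈ ℕ and define the metric ρ_k on ℕ₀^k by ρ_k(m,m') = Σ_{i=1}^k |√(m_i) − √(m'_i)|. For s = (s₁,…,s_k) ∈ ℕ₀^k define the right shift of a function σ : ℕ₀^k → ℂ by (τ_R^s σ)(m) = σ(m−s) if m_i ≥ s_i for all i = 1,…,k, and (τ_R^s σ)(m) = 0 otherwise. If σ is bounded and uniformly continuous with respect to ρ_k, then τ_R^s σ is bounded and uniformly continuous with respect to ρ_k. -/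
open scoped Classical

lemma aux_gap_mono (a N : ℝ) (h0 : 0 ≤ a) (h : a ≤ N) :
    Real.sqrt (N+1) - Real.sqrt N ≤ Real.sqrt (a+1) - Real.sqrt a := by
  have hN0 : 0 ≤ N := h0.trans h
  have ha1 : Real.sqrt (a+1) ^ 2 = a + 1 := Real.sq_sqrt (by linarith)
  have ha : Real.sqrt a ^ 2 = a := Real.sq_sqrt h0
  have hN1 : Real.sqrt (N+1) ^ 2 = N + 1 := Real.sq_sqrt (by linarith)
  have hN : Real.sqrt N ^ 2 = N := Real.sq_sqrt hN0
  have e1 : (Real.sqrt (a+1) - Real.sqrt a) * (Real.sqrt (a+1) + Real.sqrt a) = 1 := by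
    nlinarith
  have e2 : (Real.sqrt (N+1) - Real.sqrt N) * (Real.sqrt (N+1) + Real.sqrt N) = 1 := by
    nlinarith
  have hpos : 0 < Real.sqrt (a+1) + Real.sqrt a := by
    have h1 : 0 < Real.sqrt (a+1) := Real.sqrt_pos.mpr (by linarith)
    have h2 := Real.sqrt_nonneg a
    linarith
  have hle : Real.sqrt (a+1) + Real.sqrt a ≤ Real.sqrt (N+1) + Real.sqrt N := by
    have h1 := Real.sqrt_le_sqrt (by linarith : a + 1 ≤ N + 1)
    have h2 := Real.sqrt_le_sqrt h
    linarith
  have hy : 0 < Real.sqrt (N+1) - Real.sqrt N := by nlinarith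
  have hmul := mul_le_mul_of_nonneg_left hle hy.le
  nlinarith

lemma aux_gap' (a b N : ℕ) (hab : a < b) (haN : a ≤ N) :
    Real.sqrt (N+1) - Real.sqrt N ≤ Real.sqrt b - Real.sqrt a := by
  have h1 : Real.sqrt ((N:ℝ)+1) - Real.sqrt N ≤ Real.sqrt ((a:ℝ)+1) - Real.sqrt a :=
    aux_gap_mono a N (by positivity) (by exact_mod_cast haN)
  have h2 : Real.sqrt ((a:ℝ)+1) ≤ Real.sqrt b := by
    apply Real.sqrt_le_sqrt
    have : a + 1 ≤ b := hab
    exact_mod_cast this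
  linarith

lemma aux_gap (a b N : ℕ) (hne : a ≠ b) (hmin : min a b ≤ N) :
    Real.sqrt (N+1) - Real.sqrt N ≤ |Real.sqrt a - Real.sqrt b| := by
  rcases lt_or_gt_of_ne hne with h | h
  · have := aux_gap' a b N h (by omega)
    rw [abs_sub_comm, abs_of_nonneg (by linarith [Real.sqrt_le_sqrt (by exact_mod_cast h.le : (a:ℝ) ≤ b)])]
    linarith
  · have := aux_gap' b a N h (by omega)
    rw [abs_of_nonneg (by linarith [Real.sqrt_le_sqrt (by exact_mod_cast h.le : (b:ℝ) ≤ a)])]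
    linarith

lemma aux_abs_mul (x y : ℝ) (hx : 0 ≤ x) (hy : 0 ≤ y) :
    |Real.sqrt x - Real.sqrt y| * (Real.sqrt x + Real.sqrt y) = |x - y| := by
  have hs : 0 ≤ Real.sqrt x + Real.sqrt y := by positivity
  rw [← abs_of_nonneg hs, ← abs_mul]
  congr 1
  have := Real.sq_sqrt hx
  have := Real.sq_sqrt hy
  nlinarith

lemma aux_shift (a b t : ℕ) (ha : 2*t < a) (hb : 2*t < b) :
    |Real.sqrt ((a - t : ℕ)) - Real.sqrt ((b - t : ℕ))| ≤
      2 * |Real.sqrt a - Real.sqrt b| := by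
  have hta : t ≤ a := by omega
  have htb : t ≤ b := by omega
  rw [Nat.cast_sub hta, Nat.cast_sub htb]
  set x : ℝ := (a : ℝ) - t with hxdef
  set y : ℝ := (b : ℝ) - t with hydef
  have hta' : (t:ℝ) ≤ a := by exact_mod_cast hta
  have htb' : (t:ℝ) ≤ b := by exact_mod_cast htb
  have hx0 : 0 ≤ x := by simp only [hxdef]; linarith
  have hy0 : 0 ≤ y := by simp only [hydef]; linarith
  have e1 := aux_abs_mul x y hx0 hy0
  have e2 := aux_abs_mul (a:ℝ) (b:ℝ) (by positivity) (by positivity)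
  have hxy : x - y = (a:ℝ) - b := by simp only [hxdef, hydef]; ring
  rw [hxy] at e1
  have key : ∀ c : ℕ, 2*t < c → Real.sqrt (c:ℝ) ≤ 2 * Real.sqrt ((c:ℝ) - t) := by
    intro c hc
    have hc' : (2*(t:ℝ) : ℝ) < c := by exact_mod_cast hc
    have h4 : (c : ℝ) ≤ 4 * ((c:ℝ) - t) := by linarith
    calc Real.sqrt (c:ℝ) ≤ Real.sqrt (4 * ((c:ℝ) - t)) := Real.sqrt_le_sqrt h4
      _ = 2 * Real.sqrt ((c:ℝ) - t) := by
          rw [show (4:ℝ) * ((c:ℝ) - t) = 2^2 * ((c:ℝ) - t) by ring,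
            Real.sqrt_mul (by positivity), Real.sqrt_sq (by norm_num)]
  have ka := key a ha
  have kb := key b hb
  have hden : 0 < Real.sqrt x + Real.sqrt y := by
    have ha' : (2*(t:ℝ)) < a := by exact_mod_cast ha
    have hx : 0 < x := by simp only [hxdef]; linarith
    have h1 := Real.sqrt_pos.mpr hx
    have h2 := Real.sqrt_nonneg y
    linarith
  have hsum : Real.sqrt (a:ℝ) + Real.sqrt (b:ℝ) ≤ 2 * (Real.sqrt x + Real.sqrt y) := by
    simp only [hxdef, hydef] at ka kb ⊢; linarith
  nlinarith [abs_nonneg (Real.sqrt (a:ℝ) - Real.sqrt (b:ℝ)),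
    abs_nonneg (Real.sqrt x - Real.sqrt y)]

/-- The right shift `τ_R^s σ`, given by `σ(m − s)` when `m ≥ s` componentwise and `0`
otherwise, of a bounded, `ρ_k`-uniformly continuous function on `ℕ₀^k` is bounded and
`ρ_k`-uniformly continuous. -/
theorem stmt6 (k : ℕ) (s : Fin k → ℕ) (σ : (Fin k → ℕ) → ℂ)
    (hbd : ∃ C, ∀ m : Fin k → ℕ, ‖σ m‖ ≤ C)
    (huc : ∀ ε > (0 : ℝ), ∃ δ > (0 : ℝ), ∀ m m' : Fin k → ℕ,
        (∑ i, |Real.sqrt (m i) - Real.sqrt (m' i)|) < δ → ‖σ m - σ m'‖ < ε) :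
    (∃ C, ∀ m : Fin k → ℕ,
        ‖(if ∀ i, s i ≤ m i then σ (fun i => m i - s i) else 0 : ℂ)‖ ≤ C) ∧
    (∀ ε > (0 : ℝ), ∃ δ > (0 : ℝ), ∀ m m' : Fin k → ℕ,
        (∑ i, |Real.sqrt (m i) - Real.sqrt (m' i)|) < δ →
          ‖(if ∀ i, s i ≤ m i then σ (fun i => m i - s i) else 0 : ℂ) -
            (if ∀ i, s i ≤ m' i then σ (fun i => m' i - s i) else 0 : ℂ)‖ < ε) := by
  obtain ⟨C, hC⟩ := hbd
  constructor
  · refine ⟨max C 0, fun m => ?_⟩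
    split
    · exact (hC _).trans (le_max_left _ _)
    · simp
  · intro ε hε
    obtain ⟨δ', hδ', H⟩ := huc ε hε
    set N : ℕ := 2 * ∑ i, s i with hNdef
    have hsN : ∀ i, 2 * s i ≤ N := by
      intro i
      have : s i ≤ ∑ j, s j := Finset.single_le_sum (fun j _ => Nat.zero_le _) (Finset.mem_univ i)
      omega
    set g : ℝ := Real.sqrt (N+1) - Real.sqrt N with hgdef
    have hg0 : 0 < g := by
      have : Real.sqrt (N:ℝ) < Real.sqrt ((N:ℝ)+1) :=
        Real.sqrt_lt_sqrt (by positivity) (by norm_num)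
      simp only [hgdef]
      push_cast
      linarith
    refine ⟨min (δ'/2) g, lt_min (by linarith) hg0, fun m m' hsum => ?_⟩
    have hterm : ∀ i, |Real.sqrt (m i) - Real.sqrt (m' i)| < min (δ'/2) g := fun i =>
      lt_of_le_of_lt
        (Finset.single_le_sum (f := fun j => |Real.sqrt (m j) - Real.sqrt (m' j)|)
          (fun j _ => abs_nonneg _) (Finset.mem_univ i)) hsum
    have hcoord : ∀ i, m i = m' i ∨ (N < m i ∧ N < m' i) := by
      intro i
      by_contra hcon
      push_neg at hcon
      obtain ⟨hne, hsmall⟩ := hcon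
      have hmin : min (m i) (m' i) ≤ N := by
        rcases le_or_gt (m i) N with h | h
        · exact le_trans (min_le_left _ _) h
        · exact le_trans (min_le_right _ _) (hsmall h)
      have hkey : g ≤ |Real.sqrt (m i) - Real.sqrt (m' i)| := by
        have := aux_gap (m i) (m' i) N hne hmin
        simp only [hgdef]
        push_cast
        push_cast at this
        linarith
      have h1 := hterm i
      have h2 : |Real.sqrt (m i) - Real.sqrt (m' i)| < g := lt_of_lt_of_le h1 (min_le_right _ _)
      linarith
    by_cases hc : ∀ i, s i ≤ m i
    · have hc' : ∀ i, s i ≤ m' i := by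
        intro i
        rcases hcoord i with h | h
        · rw [← h]; exact hc i
        · have := hsN i; omega
      rw [if_pos hc, if_pos hc']
      apply H
      have hbound : ∀ i, |Real.sqrt ((m i - s i : ℕ)) - Real.sqrt ((m' i - s i : ℕ))| ≤
          2 * |Real.sqrt (m i) - Real.sqrt (m' i)| := by
        intro i
        rcases hcoord i with h | h
        · rw [h]
          simp [abs_nonneg]
        · exact aux_shift (m i) (m' i) (s i) (by have := hsN i; omega) (by have := hsN i; omega)
      calc (∑ i, |Real.sqrt ((m i - s i : ℕ)) - Real.sqrt ((m' i - s i : ℕ))|)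
          ≤ ∑ i, 2 * |Real.sqrt (m i) - Real.sqrt (m' i)| :=
            Finset.sum_le_sum (fun i _ => hbound i)
        _ = 2 * ∑ i, |Real.sqrt (m i) - Real.sqrt (m' i)| := by rw [Finset.mul_sum]
        _ < 2 * (δ'/2) := by
            have : (∑ i, |Real.sqrt (m i) - Real.sqrt (m' i)|) < δ'/2 :=
              lt_of_lt_of_le hsum (min_le_left _ _)
            linarith
        _ = δ' := by ring
    · have hc' : ¬ ∀ i, s i ≤ m' i := by
        intro h'
        apply hc
        intro i
        rcases hcoord i with h | h
        · rw [h]; exact h' i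
        · have := hsN i; omega
      rw [if_neg hc, if_neg hc']
      simpa using hε
end

section
/- For every integer m ≥ 1, ∫₀^∞ |r^m/m! − r^{m−1}/(m−1)!| e^{−r} dr ≤ √(2/(π m)). -/
open MeasureTheory Real Set Filter

lemma stirling_fac_lb (m : ℕ) (hm : 1 ≤ m) :
    Real.sqrt Real.pi * (Real.sqrt (2 * m) * ((m : ℝ) / Real.exp 1) ^ m)
      ≤ (m.factorial : ℝ) := by
  have h1 : Real.sqrt Real.pi ≤ Stirling.stirlingSeq m := by
    obtain ⟨k, rfl⟩ := Nat.exists_eq_add_of_le hm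
    have ht : Filter.Tendsto (Stirling.stirlingSeq ∘ Nat.succ) Filter.atTop
        (nhds (Real.sqrt Real.pi)) :=
      Stirling.tendsto_stirlingSeq_sqrt_pi.comp (Filter.tendsto_add_atTop_nat 1)
    have := Stirling.stirlingSeq'_antitone.le_of_tendsto ht k
    simpa [Nat.succ_eq_add_one, add_comm] using this
  have hpos : 0 < Real.sqrt (2 * m) * ((m : ℝ) / Real.exp 1) ^ m := by
    have : (0:ℝ) < m := by exact_mod_cast hm
    positivity
  have := mul_le_mul_of_nonneg_right h1 hpos.le
  rw [Stirling.stirlingSeq, div_mul_cancel₀] at this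
  · exact this
  · exact hpos.ne'

lemma hF_deriv (m : ℕ) (hm : 1 ≤ m) (r : ℝ) :
    HasDerivAt (fun r : ℝ => -(r ^ m / (m.factorial : ℝ)) * Real.exp (-r))
      ((r ^ m / (m.factorial : ℝ) - r ^ (m - 1) / ((m - 1).factorial : ℝ)) * Real.exp (-r)) r := by
  have h1 : HasDerivAt (fun r : ℝ => r ^ m) ((m : ℝ) * r ^ (m - 1)) r := hasDerivAt_pow m r
  have h2 : HasDerivAt (fun r : ℝ => Real.exp (-r)) (-Real.exp (-r)) r := by
    simpa [Function.comp_def] using (Real.hasDerivAt_exp (-r)).comp r (hasDerivAt_neg r)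
  have h := ((h1.div_const (m.factorial : ℝ)).neg).mul h2
  convert h using 1
  case e'_4 => rfl
  case e'_5 => rfl
  case e'_8 => rfl
  have hfac : (m.factorial : ℝ) = (m : ℝ) * ((m - 1).factorial : ℝ) := by
    exact_mod_cast (Nat.mul_factorial_pred (by omega : m ≠ 0)).symm
  have h0 : ((m - 1).factorial : ℝ) ≠ 0 := by
    exact_mod_cast (m - 1).factorial_pos.ne'
  have hm0 : (m : ℝ) ≠ 0 := by positivity
  simp only [Pi.neg_apply]
  rw [hfac]
  field_simp
  ring

/-- For every `m ≥ 1`, `∫₀^∞ |r^m/m! − r^{m−1}/(m−1)!| e^{−r} dr ≤ √(2/(π m))`. -/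
theorem stmt8 (m : ℕ) (hm : 1 ≤ m) :
    (∫ r in Set.Ioi (0 : ℝ),
        |r ^ m / (m.factorial : ℝ) - r ^ (m - 1) / ((m - 1).factorial : ℝ)| *
          Real.exp (-r))
      ≤ Real.sqrt (2 / (Real.pi * m)) := by
  have hmR : (0:ℝ) < m := by exact_mod_cast hm
  set c : ℝ := (m.factorial : ℝ) with hc
  have hcpos : (0:ℝ) < c := by rw [hc]; exact_mod_cast m.factorial_pos
  set g : ℝ → ℝ := fun r =>
    (r ^ m / (m.factorial : ℝ) - r ^ (m - 1) / ((m - 1).factorial : ℝ)) * Real.exp (-r) with hgdef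
  set F : ℝ → ℝ := fun r => -(r ^ m / (m.factorial : ℝ)) * Real.exp (-r) with hFdef
  have hderiv : ∀ x : ℝ, HasDerivAt F (g x) x := fun x => hF_deriv m hm x
  have hgcont : Continuous g := by fun_prop
  have htend : Tendsto F atTop (nhds 0) := by
    have h := (tendsto_pow_mul_exp_neg_atTop_nhds_zero m).div_const c
    simp only [zero_div] at h
    have := h.neg
    rw [neg_zero] at this
    refine this.congr fun r => ?_
    simp [hFdef]
    ring
  have hfac : (m.factorial : ℝ) = (m : ℝ) * ((m - 1).factorial : ℝ) := by
    exact_mod_cast (Nat.mul_factorial_pred (by omega : m ≠ 0)).symm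
  have hdpos : (0:ℝ) < ((m - 1).factorial : ℝ) := by exact_mod_cast (m - 1).factorial_pos
  -- sign of g
  have hsign : ∀ x : ℝ, 0 ≤ x →
      x ^ m / c - x ^ (m - 1) / ((m - 1).factorial : ℝ)
        = x ^ (m - 1) / c * (x - m) := by
    intro x hx
    have hpow : x ^ m = x ^ (m - 1) * x := by
      conv_lhs => rw [← Nat.succ_pred_eq_of_pos hm]
      rw [pow_succ]
      norm_num [Nat.pred_eq_sub_one]
    rw [hpow, hc, hfac]
    field_simp
  have hgpos : ∀ x ∈ Ioi (m : ℝ), 0 ≤ g x := by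
    intro x hx
    have hx0 : (0:ℝ) ≤ x := le_trans hmR.le (le_of_lt hx)
    have := hsign x hx0
    simp only [hgdef]
    rw [this]
    have : (0:ℝ) ≤ x ^ (m-1) / c * (x - m) := by
      apply mul_nonneg (by positivity)
      linarith [mem_Ioi.mp hx]
    positivity
  have hgneg : ∀ x ∈ Ioc (0:ℝ) (m : ℝ), g x ≤ 0 := by
    intro x hx
    have hx0 : (0:ℝ) ≤ x := hx.1.le
    simp only [hgdef]
    rw [hsign x hx0]
    apply mul_nonpos_of_nonpos_of_nonneg _ (Real.exp_pos _).le
    apply mul_nonpos_of_nonneg_of_nonpos (by positivity)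
    linarith [hx.2]
  have hF0 : F 0 = 0 := by
    simp [hFdef, zero_pow (by omega : m ≠ 0)]
  -- integral on Ioi m
  have hIoi : ∫ x in Ioi (m:ℝ), g x = 0 - F m :=
    integral_Ioi_of_hasDerivAt_of_nonneg' (fun x _ => hderiv x) hgpos htend
  have hIntIoi : IntegrableOn g (Ioi (m:ℝ)) :=
    integrableOn_Ioi_deriv_of_nonneg' (fun x _ => hderiv x) hgpos htend
  -- integral on Ioc 0 m
  have hIoc : ∫ x in Ioc (0:ℝ) (m:ℝ), g x = F m - F 0 := by
    rw [← intervalIntegral.integral_of_le hmR.le]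
    exact intervalIntegral.integral_eq_sub_of_hasDerivAt (fun x _ => hderiv x)
      (hgcont.intervalIntegrable _ _)
  -- rewrite integrand as |g|
  have habs : ∀ r : ℝ,
      |r ^ m / (m.factorial : ℝ) - r ^ (m - 1) / ((m - 1).factorial : ℝ)| * Real.exp (-r)
        = |g r| := by
    intro r
    simp only [hgdef]
    rw [abs_mul, abs_of_pos (Real.exp_pos _)]
  simp_rw [← hc] at habs
  simp_rw [habs]
  -- split the integral
  have hsplit : Ioc (0:ℝ) (m:ℝ) ∪ Ioi (m:ℝ) = Ioi (0:ℝ) := Ioc_union_Ioi_eq_Ioi hmR.le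
  have hint1 : IntegrableOn (fun r => |g r|) (Ioc (0:ℝ) m) :=
    (hgcont.abs.integrableOn_Ioc)
  have hint2 : IntegrableOn (fun r => |g r|) (Ioi (m:ℝ)) := hIntIoi.abs
  have heq : (∫ r in Ioi (0:ℝ), |g r|)
      = (∫ r in Ioc (0:ℝ) (m:ℝ), |g r|) + ∫ r in Ioi (m:ℝ), |g r| := by
    rw [← hsplit, setIntegral_union (Ioc_disjoint_Ioi le_rfl) measurableSet_Ioi hint1 hint2]
  have e1 : (∫ r in Ioc (0:ℝ) (m:ℝ), |g r|) = -(F m) := by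
    rw [setIntegral_congr_fun measurableSet_Ioc (fun x hx => abs_of_nonpos (hgneg x hx)),
      integral_neg, hIoc, hF0, sub_zero]
  have e2 : (∫ r in Ioi (m:ℝ), |g r|) = -(F m) := by
    rw [setIntegral_congr_fun measurableSet_Ioi (fun x hx => abs_of_nonneg (hgpos x hx)),
      hIoi, zero_sub]
  rw [heq, e1, e2]
  -- now arithmetic: -(F m) = (m:ℝ)^m / c * exp (-m)
  have hFm : -(F m) = (m:ℝ) ^ m * Real.exp (-(m:ℝ)) / c := by
    simp [hFdef]; ring
  rw [hFm]
  -- reduce to Stirling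
  set P : ℝ := ((m : ℝ) / Real.exp 1) ^ m with hP
  have hPpos : 0 < P := by positivity
  have hPe : (m:ℝ) ^ m * Real.exp (-(m:ℝ)) = P := by
    rw [hP, div_pow, Real.exp_neg]
    congr 1
    rw [← Real.exp_one_rpow (m:ℝ), ← Real.rpow_natCast (Real.exp 1) m]
  set D : ℝ := Real.sqrt Real.pi * (Real.sqrt (2 * m) * P) with hD
  have hDpos : 0 < D := by
    have := Real.sqrt_pos.mpr Real.pi_pos
    have h2m : (0:ℝ) < Real.sqrt (2 * m) := Real.sqrt_pos.mpr (by positivity)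
    positivity
  have hDc : D ≤ c := stirling_fac_lb m hm
  have step1 : (m:ℝ) ^ m * Real.exp (-(m:ℝ)) / c + (m:ℝ) ^ m * Real.exp (-(m:ℝ)) / c
      = 2 * P / c := by rw [hPe]; ring
  rw [step1]
  have step2 : 2 * P / c ≤ 2 * P / D :=
    div_le_div_of_nonneg_left (by positivity) hDpos hDc
  refine step2.trans (le_of_eq ?_)
  have hs2 : Real.sqrt (2 * (m:ℝ)) = Real.sqrt 2 * Real.sqrt m :=
    Real.sqrt_mul (by norm_num) _
  have hne2 : Real.sqrt 2 ≠ 0 := by positivity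
  have hnep : Real.sqrt Real.pi ≠ 0 := by
    simp [Real.sqrt_eq_zero', Real.pi_pos.le]
  have hnem : Real.sqrt (m:ℝ) ≠ 0 := by
    rw [Real.sqrt_ne_zero' ]
    exact hmR
  have : 2 * P / D = (2 / Real.sqrt 2) / (Real.sqrt Real.pi * Real.sqrt m) := by
    rw [hD, hs2]
    field_simp
  rw [this, Real.div_sqrt, Real.sqrt_div (by norm_num : (0:ℝ) ≤ 2),
    Real.sqrt_mul Real.pi_pos.le]
end

section
/- For all m, m' ∈ ℕ₀, ∫₀^∞ |r^m/m! − r^{m'}/m'!| e^{−r} dr ≤ 2√(2/π) · |√m − √(m')|. -/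
open MeasureTheory Real

lemma integ_pow_exp (k : ℕ) :
    IntegrableOn (fun r : ℝ => r ^ k * Real.exp (-r)) (Set.Ioi 0) := by
  have h := Real.GammaIntegral_convergent (s := (k : ℝ) + 1) (by positivity)
  refine h.congr_fun (fun x hx => ?_) measurableSet_Ioi
  simp only [add_sub_cancel_right]
  rw [Real.rpow_natCast, mul_comm]

lemma val_pow_exp (k : ℕ) :
    ∫ r in Set.Ioi (0:ℝ), r ^ k * Real.exp (-r) = (k.factorial : ℝ) := by
  have h := Real.Gamma_eq_integral (s := (k : ℝ) + 1) (by positivity)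
  rw [Real.Gamma_nat_eq_factorial] at h
  rw [h]
  refine setIntegral_congr_fun measurableSet_Ioi (fun x hx => ?_)
  simp only [add_sub_cancel_right]
  rw [Real.rpow_natCast, mul_comm]

lemma deriv_G (k : ℕ) (r : ℝ) :
    HasDerivAt (fun r : ℝ => r ^ (k+1) * Real.exp (-r) / ((k+1).factorial : ℝ))
      (r ^ k * Real.exp (-r) / (k.factorial : ℝ)
        - r ^ (k+1) * Real.exp (-r) / ((k+1).factorial : ℝ)) r := by
  have h1 : HasDerivAt (fun r : ℝ => r ^ (k+1)) ((k+1 : ℝ) * r ^ k) r := by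
    simpa using hasDerivAt_pow (k+1) r
  have h2 : HasDerivAt (fun r : ℝ => Real.exp (-r)) (-Real.exp (-r)) r := by
    simpa using (hasDerivAt_neg r).exp
  have : HasDerivAt (fun r : ℝ => r ^ (k+1) * Real.exp (-r) / ((k+1).factorial : ℝ))
      (((k+1 : ℝ) * r ^ k * Real.exp (-r) + r ^ (k+1) * -Real.exp (-r)) / ((k+1).factorial : ℝ)) r :=
    (h1.mul h2).div_const ((k+1).factorial : ℝ)
  convert this using 1
  have hfac : ((k+1).factorial : ℝ) = (k+1 : ℝ) * (k.factorial : ℝ) := by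
    rw [Nat.factorial_succ]; push_cast; ring
  rw [hfac]
  have hk : (k.factorial : ℝ) ≠ 0 := by exact_mod_cast k.factorial_ne_zero
  field_simp
  ring

lemma ioc_int (k : ℕ) {a : ℝ} (ha : 0 ≤ a) :
    ∫ r in Set.Ioc (0:ℝ) a,
      (r ^ k * Real.exp (-r) / (k.factorial : ℝ)
        - r ^ (k+1) * Real.exp (-r) / ((k+1).factorial : ℝ))
      = a ^ (k+1) * Real.exp (-a) / ((k+1).factorial : ℝ) := by
  rw [← intervalIntegral.integral_of_le ha]
  rw [intervalIntegral.integral_eq_sub_of_hasDerivAt (fun x _ => deriv_G k x)]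
  · simp
  · apply Continuous.intervalIntegrable
    continuity

lemma piece (k : ℕ) :
    ∫ r in Set.Ioi (0:ℝ),
      |r ^ k * Real.exp (-r) / (k.factorial : ℝ)
        - r ^ (k+1) * Real.exp (-r) / ((k+1).factorial : ℝ)|
      = 2 * (((k:ℝ)+1) ^ (k+1) * Real.exp (-((k:ℝ)+1)) / ((k+1).factorial : ℝ)) := by
  set d : ℝ → ℝ := fun r =>
    r ^ k * Real.exp (-r) / (k.factorial : ℝ)
      - r ^ (k+1) * Real.exp (-r) / ((k+1).factorial : ℝ) with hd_def
  have hk0 : (k.factorial : ℝ) ≠ 0 := by exact_mod_cast k.factorial_ne_zero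
  have hk1 : ((k+1).factorial : ℝ) ≠ 0 := by exact_mod_cast (k+1).factorial_ne_zero
  have hd1 : IntegrableOn (fun r : ℝ => r ^ k * Real.exp (-r) / (k.factorial : ℝ))
      (Set.Ioi 0) := (integ_pow_exp k).div_const _
  have hd2 : IntegrableOn (fun r : ℝ => r ^ (k+1) * Real.exp (-r) / ((k+1).factorial : ℝ))
      (Set.Ioi 0) := (integ_pow_exp (k+1)).div_const _
  have hd : IntegrableOn d (Set.Ioi 0) := hd1.sub hd2
  have hda : IntegrableOn (fun r => |d r|) (Set.Ioi 0) := hd.abs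
  have hint0 : ∫ r in Set.Ioi (0:ℝ), d r = 0 := by
    rw [hd_def, integral_sub hd1 hd2, integral_div, integral_div,
      val_pow_exp, val_pow_exp, div_self hk0, div_self hk1, sub_self]
  have hfac : ((k+1).factorial : ℝ) = ((k:ℝ)+1) * (k.factorial : ℝ) := by
    rw [Nat.factorial_succ]; push_cast; ring
  have hsign : ∀ r : ℝ, d r = Real.exp (-r) * r ^ k / ((k+1).factorial : ℝ) * (((k:ℝ)+1) - r) := by
    intro r
    rw [hd_def]
    simp only
    rw [hfac, pow_succ]
    field_simp
  have ha : (0:ℝ) ≤ (k:ℝ)+1 := by positivity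
  have hunion : Set.Ioc (0:ℝ) ((k:ℝ)+1) ∪ Set.Ioi ((k:ℝ)+1) = Set.Ioi (0:ℝ) :=
    Set.Ioc_union_Ioi_eq_Ioi ha
  have hdisj : Disjoint (Set.Ioc (0:ℝ) ((k:ℝ)+1)) (Set.Ioi ((k:ℝ)+1)) :=
    Set.Ioc_disjoint_Ioi le_rfl
  have hsplit : ∀ f : ℝ → ℝ, IntegrableOn f (Set.Ioi (0:ℝ)) →
      ∫ r in Set.Ioi (0:ℝ), f r
        = (∫ r in Set.Ioc (0:ℝ) ((k:ℝ)+1), f r) + ∫ r in Set.Ioi ((k:ℝ)+1), f r := by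
    intro f hf
    rw [← hunion]
    exact setIntegral_union hdisj measurableSet_Ioi
      (hf.mono_set (by rw [← hunion]; exact Set.subset_union_left))
      (hf.mono_set (by rw [← hunion]; exact Set.subset_union_right))
  have hIoc : ∫ r in Set.Ioc (0:ℝ) ((k:ℝ)+1), d r
      = ((k:ℝ)+1) ^ (k+1) * Real.exp (-((k:ℝ)+1)) / ((k+1).factorial : ℝ) := ioc_int k ha
  have hIoi : ∫ r in Set.Ioi ((k:ℝ)+1), d r
      = -(((k:ℝ)+1) ^ (k+1) * Real.exp (-((k:ℝ)+1)) / ((k+1).factorial : ℝ)) := by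
    have := hsplit d hd
    rw [hint0, hIoc] at this
    linarith
  have habs1 : ∫ r in Set.Ioc (0:ℝ) ((k:ℝ)+1), |d r|
      = ∫ r in Set.Ioc (0:ℝ) ((k:ℝ)+1), d r := by
    refine setIntegral_congr_fun measurableSet_Ioc (fun r hr => ?_)
    refine abs_of_nonneg ?_
    rw [hsign]
    have h1 : 0 < r := hr.1
    have h2 : r ≤ (k:ℝ)+1 := hr.2
    have : (0:ℝ) < ((k+1).factorial : ℝ) := by positivity
    have hnn : 0 ≤ Real.exp (-r) * r ^ k / ((k+1).factorial : ℝ) := by positivity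
    exact mul_nonneg hnn (by linarith)
  have habs2 : ∫ r in Set.Ioi ((k:ℝ)+1), |d r|
      = -∫ r in Set.Ioi ((k:ℝ)+1), d r := by
    rw [← integral_neg]
    refine setIntegral_congr_fun measurableSet_Ioi (fun r hr => ?_)
    refine abs_of_nonpos ?_
    rw [hsign]
    have h1 : (k:ℝ)+1 < r := hr
    have h0 : (0:ℝ) < r := lt_of_le_of_lt ha h1
    have hnn : 0 ≤ Real.exp (-r) * r ^ k / ((k+1).factorial : ℝ) := by
      have : (0:ℝ) < ((k+1).factorial : ℝ) := by positivity
      positivity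
    exact mul_nonpos_of_nonneg_of_nonpos hnn (by linarith)
  rw [hsplit (fun r => |d r|) hda, habs1, habs2, hIoc, hIoi]
  ring

lemma sqrt_pi_le (n : ℕ) : Real.sqrt π ≤ Stirling.stirlingSeq (n+1) := by
  have h := Stirling.stirlingSeq'_antitone.le_of_tendsto
    (Stirling.tendsto_stirlingSeq_sqrt_pi.comp (Filter.tendsto_add_atTop_nat 1)) n
  simpa [Function.comp] using h

lemma stirling_bound (n : ℕ) :
    ((n:ℝ)+1)^(n+1) * Real.exp (-((n:ℝ)+1)) / ((n+1).factorial : ℝ)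
      ≤ 1 / Real.sqrt (2*π*((n:ℝ)+1)) := by
  have hm : (0:ℝ) < (n:ℝ)+1 := by positivity
  have hs := sqrt_pi_le n
  rw [Stirling.stirlingSeq] at hs
  push_cast at hs
  set m : ℝ := (n:ℝ)+1 with hm_def
  set B : ℝ := (m / Real.exp 1)^(n+1) with hB_def
  have hB : 0 < B := by positivity
  have hsq : 0 < Real.sqrt (2*m) := Real.sqrt_pos.mpr (by linarith)
  have hpi : 0 < Real.sqrt π := Real.sqrt_pos.mpr Real.pi_pos
  have hfact : (0:ℝ) < ((n+1).factorial : ℝ) := by positivity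
  have key : Real.sqrt π * (Real.sqrt (2*m) * B) ≤ ((n+1).factorial : ℝ) := by
    rw [le_div_iff₀ (by positivity)] at hs
    push_cast
    linarith [hs]
  have hBe : m^(n+1) * Real.exp (-m) = B := by
    have hexp : Real.exp 1 ^ (n+1) = Real.exp m := by
      rw [← Real.exp_nat_mul]; norm_num [hm_def]
    rw [hB_def, div_pow, hexp, Real.exp_neg, div_eq_mul_inv]
  rw [hBe, show 2*π*m = π*(2*m) by ring, Real.sqrt_mul Real.pi_pos.le,
    div_le_div_iff₀ hfact (by positivity), one_mul]
  calc B * (Real.sqrt π * Real.sqrt (2*m)) = Real.sqrt π * (Real.sqrt (2*m) * B) := by ring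
  _ ≤ ((n+1).factorial : ℝ) := key

lemma piece_le (k : ℕ) :
    ∫ r in Set.Ioi (0:ℝ),
      |r ^ k * Real.exp (-r) / (k.factorial : ℝ)
        - r ^ (k+1) * Real.exp (-r) / ((k+1).factorial : ℝ)|
      ≤ 2 * Real.sqrt (2/π) * (Real.sqrt ((k:ℝ)+1) - Real.sqrt (k:ℝ)) := by
  rw [piece k]
  set a : ℝ := Real.sqrt (k:ℝ) with ha_def
  set b : ℝ := Real.sqrt ((k:ℝ)+1) with hb_def
  have ha0 : 0 ≤ a := Real.sqrt_nonneg _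
  have hb0 : 0 < b := Real.sqrt_pos.mpr (by positivity)
  have ha2 : a^2 = (k:ℝ) := Real.sq_sqrt (by positivity)
  have hb2 : b^2 = (k:ℝ)+1 := Real.sq_sqrt (by positivity)
  have key1 : 1 ≤ 2*(b-a)*b := by nlinarith [sq_nonneg (b-a)]
  have hstep : ((k:ℝ)+1) ^ (k+1) * Real.exp (-((k:ℝ)+1)) / ((k+1).factorial : ℝ)
      ≤ 1 / Real.sqrt (2*π*((k:ℝ)+1)) := stirling_bound k
  have hsqrt_split : Real.sqrt (2*π*((k:ℝ)+1)) = Real.sqrt (2*π) * b := by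
    rw [Real.sqrt_mul (by positivity)]
  have hprod : Real.sqrt (2/π) * Real.sqrt (2*π) = 2 := by
    rw [← Real.sqrt_mul (by positivity)]
    rw [show (2/π) * (2*π) = 4 by field_simp; ring]
    rw [show (4:ℝ) = 2^2 by norm_num, Real.sqrt_sq (by norm_num)]
  have hs0 : 0 < Real.sqrt (2/π) := Real.sqrt_pos.mpr (by positivity)
  have ht0 : 0 < Real.sqrt (2*π) := Real.sqrt_pos.mpr (by positivity)
  calc 2 * (((k:ℝ)+1) ^ (k+1) * Real.exp (-((k:ℝ)+1)) / ((k+1).factorial : ℝ))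
      ≤ 2 * (1 / Real.sqrt (2*π*((k:ℝ)+1))) := by linarith
  _ ≤ 2 * Real.sqrt (2/π) * (b - a) := by
      rw [hsqrt_split, mul_one_div, div_le_iff₀ (by positivity : (0:ℝ) < Real.sqrt (2*π) * b)]
      nlinarith [mul_le_mul_of_nonneg_left key1 (le_of_lt (mul_pos hs0 ht0)), hprod]

lemma tele (f : ℕ → ℝ) {a b : ℕ} (h : a ≤ b) :
    ∑ k ∈ Finset.Ico a b, (f (k+1) - f k) = f b - f a := by
  induction b, h using Nat.le_induction with
  | base => simp
  | succ b hb ih => rw [Finset.sum_Ico_succ_top hb, ih]; ring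

lemma tele' (f : ℕ → ℝ) {a b : ℕ} (h : a ≤ b) :
    ∑ k ∈ Finset.Ico a b, (f k - f (k+1)) = f a - f b := by
  induction b, h using Nat.le_induction with
  | base => simp
  | succ b hb ih => rw [Finset.sum_Ico_succ_top hb, ih]; ring

/-- For all `m, m' ∈ ℕ₀`,
`∫₀^∞ |r^m/m! − r^{m'}/m'!| e^{−r} dr ≤ 2√(2/π) |√m − √m'|`. -/
theorem stmt9 (m m' : ℕ) :
    (∫ r in Set.Ioi (0 : ℝ),
        |r ^ m / (m.factorial : ℝ) - r ^ m' / (m'.factorial : ℝ)| * Real.exp (-r))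
      ≤ 2 * Real.sqrt (2 / Real.pi) * |Real.sqrt m - Real.sqrt m'| := by
  wlog hmm : m ≤ m' generalizing m m' with H
  · have h2 := H m' m (le_of_not_ge hmm)
    have e1 : (fun r : ℝ =>
        |r ^ m / (m.factorial : ℝ) - r ^ m' / (m'.factorial : ℝ)| * Real.exp (-r))
        = fun r : ℝ =>
        |r ^ m' / (m'.factorial : ℝ) - r ^ m / (m.factorial : ℝ)| * Real.exp (-r) := by
      funext r; rw [abs_sub_comm]
    rw [e1, abs_sub_comm]
    exact h2
  have hint : ∀ j : ℕ, IntegrableOn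
      (fun r : ℝ => r ^ j * Real.exp (-r) / (j.factorial : ℝ)) (Set.Ioi 0) :=
    fun j => (integ_pow_exp j).div_const _
  have e1' : (∫ r in Set.Ioi (0:ℝ),
        |r ^ m / (m.factorial : ℝ) - r ^ m' / (m'.factorial : ℝ)| * Real.exp (-r))
      = ∫ r in Set.Ioi (0:ℝ),
        |r ^ m * Real.exp (-r) / (m.factorial : ℝ)
          - r ^ m' * Real.exp (-r) / (m'.factorial : ℝ)| := by
    refine integral_congr_ae (Filter.Eventually.of_forall fun r => ?_)
    show |r ^ m / (m.factorial : ℝ) - r ^ m' / (m'.factorial : ℝ)| * Real.exp (-r)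
      = |r ^ m * Real.exp (-r) / (m.factorial : ℝ)
          - r ^ m' * Real.exp (-r) / (m'.factorial : ℝ)|
    have hr : r ^ m * Real.exp (-r) / (m.factorial : ℝ)
        - r ^ m' * Real.exp (-r) / (m'.factorial : ℝ)
        = (r ^ m / (m.factorial : ℝ) - r ^ m' / (m'.factorial : ℝ)) * Real.exp (-r) := by
      ring
    rw [hr, abs_mul, abs_of_pos (Real.exp_pos _)]
  rw [e1']
  have hptle : ∀ r : ℝ,
      |r ^ m * Real.exp (-r) / (m.factorial : ℝ)
        - r ^ m' * Real.exp (-r) / (m'.factorial : ℝ)|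
      ≤ ∑ k ∈ Finset.Ico m m',
          |r ^ k * Real.exp (-r) / (k.factorial : ℝ)
            - r ^ (k+1) * Real.exp (-r) / ((k+1).factorial : ℝ)| := by
    intro r
    have ht := tele' (fun k => r ^ k * Real.exp (-r) / (k.factorial : ℝ)) hmm
    rw [← ht]
    exact Finset.abs_sum_le_sum_abs _ _
  have hIle : (∫ r in Set.Ioi (0:ℝ),
        |r ^ m * Real.exp (-r) / (m.factorial : ℝ)
          - r ^ m' * Real.exp (-r) / (m'.factorial : ℝ)|)
      ≤ ∫ r in Set.Ioi (0:ℝ), ∑ k ∈ Finset.Ico m m',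
          |r ^ k * Real.exp (-r) / (k.factorial : ℝ)
            - r ^ (k+1) * Real.exp (-r) / ((k+1).factorial : ℝ)| :=
    integral_mono ((hint m).sub (hint m')).abs
      (integrable_finset_sum _ fun k _ => ((hint k).sub (hint (k+1))).abs) hptle
  have heq := integral_finset_sum (μ := volume.restrict (Set.Ioi 0)) (Finset.Ico m m')
    (f := fun (k : ℕ) (r : ℝ) =>
      |r ^ k * Real.exp (-r) / (k.factorial : ℝ)
        - r ^ (k+1) * Real.exp (-r) / ((k+1).factorial : ℝ)|)
    (fun k _ => ((hint k).sub (hint (k+1))).abs)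
  rw [heq] at hIle
  have hsum : ∑ k ∈ Finset.Ico m m', (∫ r in Set.Ioi (0:ℝ),
        |r ^ k * Real.exp (-r) / (k.factorial : ℝ)
          - r ^ (k+1) * Real.exp (-r) / ((k+1).factorial : ℝ)|)
      ≤ ∑ k ∈ Finset.Ico m m',
          2 * Real.sqrt (2/π) * (Real.sqrt ((k:ℝ)+1) - Real.sqrt (k:ℝ)) :=
    Finset.sum_le_sum fun k _ => piece_le k
  have htele2 : ∑ k ∈ Finset.Ico m m', (Real.sqrt ((k:ℝ)+1) - Real.sqrt (k:ℝ))
      = Real.sqrt (m':ℝ) - Real.sqrt (m:ℝ) := by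
    have := tele (fun k => Real.sqrt (k:ℝ)) hmm
    simp only [Nat.cast_add, Nat.cast_one] at this
    exact this
  have habs : |Real.sqrt (m:ℝ) - Real.sqrt (m':ℝ)| = Real.sqrt (m':ℝ) - Real.sqrt (m:ℝ) := by
    rw [abs_sub_comm, abs_of_nonneg (sub_nonneg.mpr
      (Real.sqrt_le_sqrt (by exact_mod_cast hmm)))]
  rw [habs]
  calc (∫ r in Set.Ioi (0:ℝ),
        |r ^ m * Real.exp (-r) / (m.factorial : ℝ)
          - r ^ m' * Real.exp (-r) / (m'.factorial : ℝ)|)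
      ≤ ∑ k ∈ Finset.Ico m m',
          2 * Real.sqrt (2/π) * (Real.sqrt ((k:ℝ)+1) - Real.sqrt (k:ℝ)) := hIle.trans hsum
  _ = 2 * Real.sqrt (2/π) * (Real.sqrt (m':ℝ) - Real.sqrt (m:ℝ)) := by
      rw [← Finset.mul_sum, htele2]
end

section
/- Let k ∈ ℕ, n = (n₁,…,n_k) ∈ ℕ^k, and let a : (0,∞)^k → ℂ be bounded and measurable with ‖a‖_∞ = ess sup |a|. Define γ_{n,a}(m) = (1/∏_{j=1}^k (m_j+n_j−1)!) ∫_{(0,∞)^k} a(√r₁,…,√r_k) ∏_{j=1}^k r_j^{m_j+n_j−1} e^{−(r₁+⋯+r_k)} dr₁⋯dr_k for m ∈ ℕ₀^k. Then γ_{n,a} is Lipschitz with respect to the square-root metric: |γ_{n,a}(m) − γ_{n,a}(m')| ≤ 2√(2/π) · ‖a‖_∞ · ρ_k(m,m') for all m, m' ∈ ℕ₀^k. In particular γ_{n,a} is bounded and uniformly continuous with respect to ρ_k. -/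
open MeasureTheory


open MeasureTheory Set Real Filter

noncomputable def stmt11gd (p : ℕ) (r : ℝ) : ℝ := r ^ p * Real.exp (-r) / p.factorial

noncomputable def stmt11dd (p : ℕ) : ℝ → ℝ := (Set.Ioi (0:ℝ)).indicator (stmt11gd p)

lemma stmt11gd_nonneg (p : ℕ) {r : ℝ} (hr : 0 ≤ r) : 0 ≤ stmt11gd p r := by
  unfold stmt11gd; positivity

lemma stmt11dd_nonneg (p : ℕ) (r : ℝ) : 0 ≤ stmt11dd p r := by
  unfold stmt11dd
  by_cases h : r ∈ Set.Ioi (0:ℝ)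
  · rw [Set.indicator_of_mem h]; exact stmt11gd_nonneg p (le_of_lt h)
  · rw [Set.indicator_of_notMem h]

lemma stmt11gd_measurable (p : ℕ) : Measurable (stmt11gd p) := by
  unfold stmt11gd; fun_prop

lemma stmt11dd_measurable (p : ℕ) : Measurable (stmt11dd p) :=
  (stmt11gd_measurable p).indicator measurableSet_Ioi

lemma stmt11gd_integrableOn (p : ℕ) : IntegrableOn (stmt11gd p) (Set.Ioi 0) := by
  have h := Real.GammaIntegral_convergent (s := (p+1:ℝ)) (by positivity)
  have : EqOn (fun x : ℝ => Real.exp (-x) * x ^ ((p+1:ℝ) - 1)) (fun x => x ^ p * Real.exp (-x))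
      (Set.Ioi 0) := by
    intro x hx
    simp only
    rw [add_sub_cancel_right, Real.rpow_natCast]
    ring
  have h2 : IntegrableOn (fun x : ℝ => x ^ p * Real.exp (-x)) (Set.Ioi 0) :=
    (integrableOn_congr_fun this measurableSet_Ioi).mp h
  unfold stmt11gd
  have h3 := h2.mul_const ((p.factorial : ℝ))⁻¹
  simp only [div_eq_mul_inv]
  exact h3

lemma stmt11dd_integrable (p : ℕ) : Integrable (stmt11dd p) :=
  (integrable_indicator_iff measurableSet_Ioi).2 (stmt11gd_integrableOn p)

lemma stmt11gd_integral (p : ℕ) : ∫ r in Set.Ioi 0, stmt11gd p r = 1 := by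
  have h := Real.Gamma_eq_integral (s := (p+1:ℝ)) (by positivity)
  rw [Real.Gamma_nat_eq_factorial] at h
  have : ∫ x in Set.Ioi 0, Real.exp (-x) * x ^ ((p+1:ℝ) - 1) = (p.factorial : ℝ) := h.symm
  rw [setIntegral_congr_fun measurableSet_Ioi (g := fun x => x ^ p * Real.exp (-x))
    (by intro x hx; simp only; rw [add_sub_cancel_right, Real.rpow_natCast]; ring)] at this
  unfold stmt11gd
  rw [MeasureTheory.integral_div, this, div_self]
  exact_mod_cast p.factorial_pos.ne'

lemma stmt11dd_integral (p : ℕ) : ∫ r, stmt11dd p r = 1 := by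
  unfold stmt11dd
  rw [integral_indicator measurableSet_Ioi]
  exact stmt11gd_integral p

lemma stmt11gd_hasDerivAt (p : ℕ) (r : ℝ) :
    HasDerivAt (stmt11gd (p+1)) (stmt11gd p r - stmt11gd (p+1) r) r := by
  unfold stmt11gd
  have h1 : HasDerivAt (fun r : ℝ => r ^ (p+1) * Real.exp (-r))
      ((p+1) * r ^ p * Real.exp (-r) + r ^ (p+1) * (-Real.exp (-r))) r := by
    have hp : HasDerivAt (fun r : ℝ => r ^ (p+1)) ((p+1) * r ^ p) r := by
      simpa using hasDerivAt_pow (p+1) r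
    have he : HasDerivAt (fun r : ℝ => Real.exp (-r)) (-Real.exp (-r)) r := by
      simpa [Function.comp_def] using ((Real.hasDerivAt_exp (-r)).comp r (hasDerivAt_neg r))
    simpa [Pi.mul_def] using hp.mul he
  have := h1.div_const ((p+1).factorial : ℝ)
  refine this.congr_deriv ?_
  rw [Nat.factorial_succ]
  push_cast
  have h2 : ((p:ℝ)+1) ≠ 0 := by positivity
  have h3 : (p.factorial : ℝ) ≠ 0 := by exact_mod_cast p.factorial_pos.ne'
  field_simp
  ring

lemma stmt11gd_tendsto (p : ℕ) : Filter.Tendsto (stmt11gd p) Filter.atTop (nhds 0) := by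
  unfold stmt11gd
  have := (Real.tendsto_pow_mul_exp_neg_atTop_nhds_zero p).div_const (p.factorial : ℝ)
  simpa using this

lemma stmt11_adjacent (p : ℕ) :
    ∫ r in Set.Ioi 0, |stmt11gd p r - stmt11gd (p+1) r| = 2 * stmt11gd (p+1) ((p:ℝ)+1) := by
  set c : ℝ := (p:ℝ) + 1 with hc
  have hc0 : (0:ℝ) < c := by positivity
  have hint : ∀ q : ℕ, IntegrableOn (stmt11gd q) (Set.Ioi 0) := stmt11gd_integrableOn
  have hsub : IntegrableOn (fun r => stmt11gd p r - stmt11gd (p+1) r) (Set.Ioi 0) :=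
    (hint p).sub (hint (p+1))
  have hsubabs : IntegrableOn (fun r => |stmt11gd p r - stmt11gd (p+1) r|) (Set.Ioi 0) := hsub.abs
  have hsubneg : IntegrableOn (fun r => stmt11gd (p+1) r - stmt11gd p r) (Set.Ioi 0) :=
    (hint (p+1)).sub (hint p)
  have hratio : ∀ r : ℝ, stmt11gd (p+1) r = stmt11gd p r * (r / c) := by
    intro r
    unfold stmt11gd
    rw [Nat.factorial_succ, pow_succ]
    have h2 : ((p:ℝ)+1) ≠ 0 := by positivity
    have h3 : (p.factorial : ℝ) ≠ 0 := by exact_mod_cast p.factorial_pos.ne'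
    push_cast
    field_simp
    ring
  have hsign : ∀ r : ℝ, 0 < r → r ≤ c → stmt11gd (p+1) r ≤ stmt11gd p r := by
    intro r hr hrc
    rw [hratio r]
    have h0 : 0 ≤ stmt11gd p r := div_nonneg (mul_nonneg (pow_nonneg hr.le p) (Real.exp_pos _).le)
      (Nat.cast_nonneg _)
    nlinarith [mul_le_mul_of_nonneg_left (div_le_one_of_le₀ hrc hc0.le) h0]
  have hsign' : ∀ r : ℝ, c ≤ r → stmt11gd p r ≤ stmt11gd (p+1) r := by
    intro r hrc
    have hr : (0:ℝ) ≤ r := hc0.le.trans hrc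
    rw [hratio r]
    have h0 : 0 ≤ stmt11gd p r := div_nonneg (mul_nonneg (pow_nonneg hr p) (Real.exp_pos _).le)
      (Nat.cast_nonneg _)
    have h1 : (1:ℝ) ≤ r / c := (one_le_div hc0).2 hrc
    nlinarith
  have hIoc : ∫ r in Set.Ioc 0 c, |stmt11gd p r - stmt11gd (p+1) r| = stmt11gd (p+1) c := by
    rw [setIntegral_congr_fun measurableSet_Ioc
      (g := fun r => stmt11gd p r - stmt11gd (p+1) r)
      (by intro r hr; simp only; rw [abs_of_nonneg (sub_nonneg.2 (hsign r hr.1 hr.2))])]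
    rw [← intervalIntegral.integral_of_le hc0.le]
    rw [intervalIntegral.integral_eq_sub_of_hasDerivAt
      (fun r _ => stmt11gd_hasDerivAt p r)
      (by
        rw [intervalIntegrable_iff_integrableOn_Ioc_of_le hc0.le]
        exact hsub.mono_set Set.Ioc_subset_Ioi_self)]
    have : stmt11gd (p+1) 0 = 0 := by unfold stmt11gd; simp
    rw [this, sub_zero]
  have hIoi : ∫ r in Set.Ioi c, |stmt11gd p r - stmt11gd (p+1) r| = stmt11gd (p+1) c := by
    rw [setIntegral_congr_fun measurableSet_Ioi
      (g := fun r => stmt11gd (p+1) r - stmt11gd p r)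
      (by intro r hr; simp only; rw [abs_of_nonpos (sub_nonpos.2 (hsign' r (le_of_lt hr))), neg_sub])]
    have := integral_Ioi_of_hasDerivAt_of_tendsto' (a := c)
      (f := fun r => -stmt11gd (p+1) r)
      (f' := fun r => stmt11gd (p+1) r - stmt11gd p r)
      (fun r _ => by have h := (stmt11gd_hasDerivAt p r).neg; rw [neg_sub] at h; exact h)
      (hsubneg.mono_set (Set.Ioi_subset_Ioi hc0.le))
      (by simpa using (stmt11gd_tendsto (p+1)).neg)
    simpa using this
  calc ∫ r in Set.Ioi 0, |stmt11gd p r - stmt11gd (p+1) r|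
      = ∫ r in Set.Ioc 0 c ∪ Set.Ioi c, |stmt11gd p r - stmt11gd (p+1) r| := by
        rw [Set.Ioc_union_Ioi_eq_Ioi hc0.le]
    _ = (∫ r in Set.Ioc 0 c, |stmt11gd p r - stmt11gd (p+1) r|)
        + ∫ r in Set.Ioi c, |stmt11gd p r - stmt11gd (p+1) r| := by
        apply setIntegral_union Set.Ioc_disjoint_Ioi_same measurableSet_Ioi
        · exact (hsubabs.mono_set Set.Ioc_subset_Ioi_self)
        · exact (hsubabs.mono_set (Set.Ioi_subset_Ioi hc0.le))
    _ = 2 * stmt11gd (p+1) c := by rw [hIoc, hIoi]; ring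

lemma stmt11_stirling (q : ℕ) (hq : 1 ≤ q) :
    stmt11gd q (q:ℝ) ≤ 1 / (Real.sqrt π * Real.sqrt (2*q)) := by
  obtain ⟨t, rfl⟩ := Nat.exists_eq_add_of_le hq
  set q := 1 + t with hqdef
  have hq1 : q = t + 1 := by omega
  have hpi : Real.sqrt π ≤ Stirling.stirlingSeq q := by
    rw [hq1]
    exact Antitone.le_of_tendsto Stirling.stirlingSeq'_antitone
      (Stirling.tendsto_stirlingSeq_sqrt_pi.comp (Filter.tendsto_add_atTop_nat 1)) t
  have hqpos : (0:ℝ) < q := by positivity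
  have hden : (0:ℝ) < Real.sqrt (2*q) * ((q:ℝ)/Real.exp 1)^q := by positivity
  have hfact : Real.sqrt π * (Real.sqrt (2*q) * ((q:ℝ)/Real.exp 1)^q) ≤ q.factorial := by
    have := (le_div_iff₀ hden).1 hpi
    calc Real.sqrt π * (Real.sqrt (2*q) * ((q:ℝ)/Real.exp 1)^q)
        ≤ Stirling.stirlingSeq q * (Real.sqrt (2*q) * ((q:ℝ)/Real.exp 1)^q) := by
          apply mul_le_mul_of_nonneg_right hpi hden.le
      _ = q.factorial := by
          rw [Stirling.stirlingSeq]; field_simp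
  have hqq : ((q:ℝ)/Real.exp 1)^q = (q:ℝ)^q * Real.exp (-(q:ℝ)) := by
    rw [div_pow, Real.exp_neg, ← Real.exp_one_rpow (q:ℝ)]
    rw [← Real.rpow_natCast (Real.exp 1) q]
    ring
  have hnum : (0:ℝ) < (q:ℝ)^q * Real.exp (-(q:ℝ)) := by positivity
  unfold stmt11gd
  rw [div_le_div_iff₀ (by exact_mod_cast q.factorial_pos) (by positivity)]
  calc (q:ℝ)^q * Real.exp (-(q:ℝ)) * (Real.sqrt π * Real.sqrt (2*q))
      = Real.sqrt π * (Real.sqrt (2*q) * ((q:ℝ)/Real.exp 1)^q) := by rw [hqq]; ring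
    _ ≤ q.factorial := hfact
    _ = 1 * q.factorial := (one_mul _).symm

lemma stmt11_invsqrt (x : ℝ) (hx : 1 ≤ x) :
    1 / Real.sqrt x ≤ 2 * (Real.sqrt x - Real.sqrt (x-1)) := by
  have h0 : (0:ℝ) < x := by linarith
  have h1 : (0:ℝ) ≤ x - 1 := by linarith
  set a := Real.sqrt x
  set b := Real.sqrt (x-1)
  have ha : a^2 = x := Real.sq_sqrt h0.le
  have hb : b^2 = x - 1 := Real.sq_sqrt h1
  have hapos : 0 < a := Real.sqrt_pos.2 h0
  have hbnn : 0 ≤ b := Real.sqrt_nonneg _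
  have hba : b ≤ a := Real.sqrt_le_sqrt (by linarith)
  rw [div_le_iff₀ hapos]
  nlinarith [sq_nonneg (a-b)]

lemma stmt11_step (p : ℕ) :
    ∫ r in Set.Ioi 0, |stmt11gd p r - stmt11gd (p+1) r|
      ≤ 2 * Real.sqrt (2/π) * (Real.sqrt ((p:ℝ)+1) - Real.sqrt (p:ℝ)) := by
  rw [stmt11_adjacent p]
  have h1 : stmt11gd (p+1) ((p:ℝ)+1) ≤ 1 / (Real.sqrt π * Real.sqrt (2*((p:ℕ)+1))) := by
    have := stmt11_stirling (p+1) (by omega)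
    push_cast at this ⊢
    exact this
  have hq : (0:ℝ) < (p:ℝ)+1 := by positivity
  have e1 : Real.sqrt (2*((p:ℝ)+1)) = Real.sqrt 2 * Real.sqrt ((p:ℝ)+1) :=
    Real.sqrt_mul (by norm_num) _
  have e2 : Real.sqrt (2/π) = Real.sqrt 2 / Real.sqrt π := Real.sqrt_div (by norm_num) π
  have h22 : Real.sqrt 2 * Real.sqrt 2 = 2 := Real.mul_self_sqrt (by norm_num)
  have hpi : (0:ℝ) < Real.sqrt π := Real.sqrt_pos.2 Real.pi_pos
  have hsq : (0:ℝ) < Real.sqrt ((p:ℝ)+1) := Real.sqrt_pos.2 hq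
  have hs2 : (0:ℝ) < Real.sqrt 2 := by positivity
  calc 2 * stmt11gd (p+1) ((p:ℝ)+1)
      ≤ 2 * (1 / (Real.sqrt π * Real.sqrt (2*((p:ℝ)+1)))) := by
        have h1' := h1
        push_cast at h1'
        nlinarith [h1']
    _ = Real.sqrt (2/π) * (1 / Real.sqrt ((p:ℝ)+1)) := by
        rw [e1, e2]
        field_simp
        linear_combination (-1 : ℝ) * h22
    _ ≤ Real.sqrt (2/π) * (2 * (Real.sqrt ((p:ℝ)+1) - Real.sqrt (p:ℝ))) := by
        apply mul_le_mul_of_nonneg_left _ (Real.sqrt_nonneg _)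
        have := stmt11_invsqrt ((p:ℝ)+1) (by push_cast; linarith [Nat.cast_nonneg (α := ℝ) p])
        rw [add_sub_cancel_right] at this
        exact this
    _ = 2 * Real.sqrt (2/π) * (Real.sqrt ((p:ℝ)+1) - Real.sqrt (p:ℝ)) := by ring

lemma stmt11dd_abs_integral (p q : ℕ) :
    ∫ x, |stmt11dd p x - stmt11dd q x| = ∫ r in Set.Ioi 0, |stmt11gd p r - stmt11gd q r| := by
  rw [← integral_indicator measurableSet_Ioi]
  congr 1
  funext x
  by_cases h : x ∈ Set.Ioi (0:ℝ)
  · simp [stmt11dd, Set.indicator_of_mem h]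
  · simp [stmt11dd, Set.indicator_of_notMem h]

lemma stmt11_chain_le {p q : ℕ} (hpq : p ≤ q) :
    ∫ x, |stmt11dd p x - stmt11dd q x|
      ≤ 2 * Real.sqrt (2/π) * (Real.sqrt (q:ℝ) - Real.sqrt (p:ℝ)) := by
  induction q, hpq using Nat.le_induction with
  | base => simp
  | succ q hpq ih =>
    have habs : ∀ a b : ℕ, Integrable (fun x => |stmt11dd a x - stmt11dd b x|) :=
      fun a b => ((stmt11dd_integrable a).sub (stmt11dd_integrable b)).abs
    have h1 : ∫ x, |stmt11dd p x - stmt11dd (q+1) x|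
        ≤ ∫ x, (|stmt11dd p x - stmt11dd q x| + |stmt11dd q x - stmt11dd (q+1) x|) := by
      apply integral_mono (habs p (q+1)) ((habs p q).add (habs q (q+1)))
      intro x
      exact abs_sub_le _ _ _
    rw [integral_add (habs p q) (habs q (q+1))] at h1
    have h2 := stmt11_step q
    rw [← stmt11dd_abs_integral q (q+1)] at h2
    push_cast
    calc ∫ x, |stmt11dd p x - stmt11dd (q+1) x|
        ≤ (∫ x, |stmt11dd p x - stmt11dd q x|) + ∫ x, |stmt11dd q x - stmt11dd (q+1) x| := h1
      _ ≤ 2 * Real.sqrt (2/π) * (Real.sqrt (q:ℝ) - Real.sqrt (p:ℝ))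
          + 2 * Real.sqrt (2/π) * (Real.sqrt ((q:ℝ)+1) - Real.sqrt (q:ℝ)) := add_le_add ih h2
      _ = 2 * Real.sqrt (2/π) * (Real.sqrt ((q:ℝ)+1) - Real.sqrt (p:ℝ)) := by ring

lemma stmt11_chain (p q : ℕ) :
    ∫ x, |stmt11dd p x - stmt11dd q x|
      ≤ 2 * Real.sqrt (2/π) * |Real.sqrt (p:ℝ) - Real.sqrt (q:ℝ)| := by
  rcases le_total p q with h | h
  · rw [abs_sub_comm, abs_of_nonneg (sub_nonneg.2 (Real.sqrt_le_sqrt (by exact_mod_cast h)))]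
    exact stmt11_chain_le h
  · rw [abs_of_nonneg (sub_nonneg.2 (Real.sqrt_le_sqrt (by exact_mod_cast h)))]
    have := stmt11_chain_le h
    simpa [abs_sub_comm] using this

lemma stmt11_sqrt_shift (m m' c : ℕ) :
    |Real.sqrt ((m:ℝ) + c) - Real.sqrt ((m':ℝ) + c)| ≤ |Real.sqrt (m:ℝ) - Real.sqrt (m':ℝ)| := by
  wlog h : m' ≤ m generalizing m m'
  · rw [abs_sub_comm, abs_sub_comm (Real.sqrt (m:ℝ))]
    exact this m' m (le_of_not_ge h)
  have hc : (0:ℝ) ≤ c := Nat.cast_nonneg c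
  have hm' : (0:ℝ) ≤ m' := Nat.cast_nonneg m'
  have hmm : (m':ℝ) ≤ m := by exact_mod_cast h
  set x := Real.sqrt (m':ℝ)
  set y := Real.sqrt (m:ℝ)
  set u := Real.sqrt ((m':ℝ) + c)
  set v := Real.sqrt ((m:ℝ) + c)
  have hx : x^2 = m' := Real.sq_sqrt hm'
  have hy : y^2 = m := Real.sq_sqrt (hm'.trans hmm)
  have hu : u^2 = (m':ℝ) + c := Real.sq_sqrt (by linarith)
  have hv : v^2 = (m:ℝ) + c := Real.sq_sqrt (by linarith)
  have hxy : x ≤ y := Real.sqrt_le_sqrt hmm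
  have huv : u ≤ v := Real.sqrt_le_sqrt (by linarith)
  have hxu : x ≤ u := Real.sqrt_le_sqrt (by linarith)
  have hyv : y ≤ v := Real.sqrt_le_sqrt (by linarith)
  have hx0 : 0 ≤ x := Real.sqrt_nonneg _
  rw [abs_of_nonneg (by linarith), abs_of_nonneg (by linarith)]
  nlinarith [sq_nonneg (v - u), sq_nonneg (y - x)]

lemma stmt11_sq_hasFDerivAt (k : ℕ) (x : Fin k → ℝ) :
    HasFDerivAt (𝕜 := ℝ) (fun s : Fin k → ℝ => fun j => s j ^ 2)
      (ContinuousLinearMap.pi fun j => (2 * x j) • ContinuousLinearMap.proj j) x := by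
  apply hasFDerivAt_pi'.2
  intro i
  have hproj : HasFDerivAt (𝕜 := ℝ) (fun s : Fin k → ℝ => s i)
      (ContinuousLinearMap.proj (R := ℝ) (φ := fun _ : Fin k => ℝ) i) x := by
    have := (ContinuousLinearMap.proj (R := ℝ) (φ := fun _ : Fin k => ℝ) i).hasFDerivAt (x := x)
    exact this
  have hpow : HasDerivAt (fun y : ℝ => y ^ 2) (2 * x i) (x i) := by
    simpa using hasDerivAt_pow 2 (x i)
  have h := hpow.comp_hasFDerivAt x hproj
  have heq : ((ContinuousLinearMap.proj (R := ℝ) (φ := fun _ : Fin k => ℝ) i).comp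
      (ContinuousLinearMap.pi fun j => (2 * x j) • ContinuousLinearMap.proj
        (R := ℝ) (φ := fun _ : Fin k => ℝ) j))
      = (2 * x i) • ContinuousLinearMap.proj (R := ℝ) (φ := fun _ : Fin k => ℝ) i := by
    ext s
    simp
  rw [heq]
  exact h

lemma stmt11_ae_bound (k : ℕ) (a : (Fin k → ℝ) → ℂ) (C : ℝ)
    (hC : ∀ᵐ r : Fin k → ℝ ∂volume, (∀ i, 0 < r i) → ‖a r‖ ≤ C) :
    ∀ᵐ r : Fin k → ℝ ∂volume, (∀ i, 0 < r i) → ‖a (fun j => Real.sqrt (r j))‖ ≤ C := by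
  rw [ae_iff] at hC ⊢
  obtain ⟨T, hNT, hTm, hT0⟩ := exists_measurable_superset_of_null hC
  set S : Set (Fin k → ℝ) := Set.pi Set.univ fun _ : Fin k => Set.Ioi (0:ℝ) with hS
  have hSm : MeasurableSet S := MeasurableSet.univ_pi fun _ => measurableSet_Ioi
  set φ : (Fin k → ℝ) → (Fin k → ℝ) := fun s j => s j ^ 2 with hφ
  have himg : volume (φ '' (T ∩ S)) = 0 := by
    have h1 := addHaar_image_le_lintegral_abs_det_fderiv volume (hTm.inter hSm)
      (f := φ) (f' := fun x => ContinuousLinearMap.pi fun j =>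
        (2 * x j) • ContinuousLinearMap.proj j)
      (fun x _ => (stmt11_sq_hasFDerivAt k x).hasFDerivWithinAt)
    have h0 : volume (T ∩ S) = 0 :=
      le_antisymm (le_trans (measure_mono Set.inter_subset_left) hT0.le) (zero_le)
    rw [Measure.restrict_eq_zero.2 h0, lintegral_zero_measure] at h1
    exact le_antisymm h1 (zero_le)
  refine measure_mono_null ?_ himg
  intro r hr
  simp only [Set.mem_setOf_eq, Classical.not_imp] at hr
  obtain ⟨hrpos, hbad⟩ := hr
  refine ⟨fun j => Real.sqrt (r j), ⟨hNT ?_, ?_⟩, ?_⟩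
  · simp only [Set.mem_setOf_eq, Classical.not_imp]
    exact ⟨fun i => Real.sqrt_pos.2 (hrpos i), hbad⟩
  · intro j _
    exact Real.sqrt_pos.2 (hrpos j)
  · funext j
    exact Real.sq_sqrt (hrpos j).le

lemma stmt11dd_eq_zero {p : ℕ} {r : ℝ} (h : ¬ 0 < r) : stmt11dd p r = 0 :=
  Set.indicator_of_notMem h _


/-- The eigenvalue function `γ_{n,a}` of a Toeplitz operator with bounded measurable
`k`-quasi-radial symbol `a` (with `‖a‖_∞ ≤ C` almost everywhere on `(0,∞)^k`) is
Lipschitz with constant `2√(2/π)·C` for the square-root metric `ρ_k`; in particular it is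
bounded and uniformly continuous with respect to `ρ_k`. -/
theorem stmt11 (k : ℕ) (n : Fin k → ℕ) (hn : ∀ j, 1 ≤ n j)
    (a : (Fin k → ℝ) → ℂ) (ha : Measurable a) (C : ℝ) (hC0 : 0 ≤ C)
    (hC : ∀ᵐ r : Fin k → ℝ ∂volume, (∀ i, 0 < r i) → ‖a r‖ ≤ C)
    (γ : (Fin k → ℕ) → ℂ)
    (hγ : ∀ m : Fin k → ℕ,
        γ m = (1 / ∏ j, ((m j + n j - 1).factorial : ℂ)) *
          ∫ r in Set.univ.pi fun _ : Fin k => Set.Ioi (0 : ℝ),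
            a (fun j => Real.sqrt (r j)) *
              (∏ j, (r j : ℂ) ^ (m j + n j - 1)) *
              (Real.exp (-(∑ j, r j)) : ℂ)) :
    (∀ m m' : Fin k → ℕ,
        ‖γ m - γ m'‖ ≤ 2 * Real.sqrt (2 / Real.pi) * C *
          ∑ i, |Real.sqrt (m i) - Real.sqrt (m' i)|) ∧
    (∃ C', ∀ m : Fin k → ℕ, ‖γ m‖ ≤ C') ∧
    (∀ ε > (0 : ℝ), ∃ δ > (0 : ℝ), ∀ m m' : Fin k → ℕ,
        (∑ i, |Real.sqrt (m i) - Real.sqrt (m' i)|) < δ → ‖γ m - γ m'‖ < ε) := by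
  classical
  set K : ℝ := 2 * Real.sqrt (2 / Real.pi) with hK
  have hK0 : 0 ≤ K := by positivity
  set S : Set (Fin k → ℝ) := Set.univ.pi fun _ : Fin k => Set.Ioi (0:ℝ) with hSdef
  have hSm : MeasurableSet S := MeasurableSet.univ_pi fun _ => measurableSet_Ioi
  set P : (Fin k → ℕ) → Fin k → ℕ := fun m j => m j + n j - 1 with hP
  set D : (Fin k → ℕ) → (Fin k → ℝ) → ℝ := fun m r => ∏ j, stmt11dd (P m j) (r j) with hD
  set Φ : (Fin k → ℕ) → (Fin k → ℝ) → ℂ :=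
    fun m r => a (fun j => Real.sqrt (r j)) * ((D m r : ℝ) : ℂ) with hΦ
  have hae := stmt11_ae_bound k a C hC
  have hD_nonneg : ∀ m r, 0 ≤ D m r := fun m r =>
    Finset.prod_nonneg fun j _ => stmt11dd_nonneg _ _
  -- Step A : γ m = ∫ Φ m
  have hA : ∀ m, γ m = ∫ r, Φ m r := by
    intro m
    rw [hγ m]
    have h1 : ∀ r : Fin k → ℝ, r ∈ S →
        (1 / ∏ j, ((m j + n j - 1).factorial : ℂ)) *
          (a (fun j => Real.sqrt (r j)) * (∏ j, (r j : ℂ) ^ (m j + n j - 1)) *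
            (Real.exp (-(∑ j, r j)) : ℂ)) = Φ m r := by
      intro r hr
      have hrj : ∀ j, 0 < r j := fun j => hr j (Set.mem_univ j)
      have hDval : D m r = ∏ j, ((r j) ^ (m j + n j - 1) * Real.exp (-(r j)) /
          ((m j + n j - 1).factorial : ℝ)) := by
        apply Finset.prod_congr rfl
        intro j _
        rw [show stmt11dd (P m j) (r j) = stmt11gd (P m j) (r j) from
          Set.indicator_of_mem (hrj j) _]
        rfl
      simp only [hΦ, hDval]
      push_cast
      rw [show Complex.exp (-(∑ j, ((r j : ℂ)))) = ∏ j, Complex.exp (-(r j : ℂ)) by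
        rw [← Complex.exp_sum]; congr 1; rw [Finset.sum_neg_distrib]]
      rw [Finset.prod_div_distrib, Finset.prod_mul_distrib]
      have hfac : (∏ j, (((m j + n j - 1).factorial : ℕ) : ℂ)) ≠ 0 := by
        apply Finset.prod_ne_zero_iff.2
        intro j _
        exact_mod_cast (Nat.factorial_pos _).ne'
      field_simp
    have h2 : ∀ r : Fin k → ℝ, r ∉ S → Φ m r = 0 := by
      intro r hr
      simp only [hSdef, Set.mem_pi, Set.mem_univ, forall_true_left, not_forall] at hr
      obtain ⟨j, hj⟩ := hr
      have : stmt11dd (P m j) (r j) = 0 := stmt11dd_eq_zero (by simpa using hj)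
      simp only [hΦ, hD]
      rw [Finset.prod_eq_zero (Finset.mem_univ j) this]
      simp
    calc (1 / ∏ j, ((m j + n j - 1).factorial : ℂ)) *
          ∫ r in S, a (fun j => Real.sqrt (r j)) * (∏ j, (r j : ℂ) ^ (m j + n j - 1)) *
            (Real.exp (-(∑ j, r j)) : ℂ)
        = ∫ r in S, (1 / ∏ j, ((m j + n j - 1).factorial : ℂ)) *
            (a (fun j => Real.sqrt (r j)) * (∏ j, (r j : ℂ) ^ (m j + n j - 1)) *
              (Real.exp (-(∑ j, r j)) : ℂ)) := (integral_const_mul _ _).symm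
      _ = ∫ r in S, Φ m r := setIntegral_congr_fun hSm fun r hr => h1 r hr
      _ = ∫ r, Φ m r := by
          rw [← integral_indicator hSm]
          congr 1
          funext r
          by_cases hr : r ∈ S
          · rw [Set.indicator_of_mem hr]
          · rw [Set.indicator_of_notMem hr, h2 r hr]
  -- measurability of Φ
  have hΦmeas : ∀ m, AEStronglyMeasurable (Φ m) volume := by
    intro m
    apply Measurable.aestronglyMeasurable
    apply Measurable.mul
    · exact ha.comp (measurable_pi_lambda _ fun j =>
        Real.continuous_sqrt.measurable.comp (measurable_pi_apply j))
    · exact Complex.measurable_ofReal.comp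
        (Finset.measurable_prod Finset.univ fun j _ =>
          (stmt11dd_measurable (P m j)).comp (measurable_pi_apply j))
  have hDint : ∀ m, Integrable (D m) := fun m =>
    Integrable.fintype_prod (f := fun j => stmt11dd (P m j)) fun j => stmt11dd_integrable _
  have hDintegral : ∀ m, ∫ r, D m r = 1 := by
    intro m
    simp only [hD]
    rw [MeasureTheory.integral_fintype_prod_volume_eq_prod (fun j => stmt11dd (P m j))]
    exact Finset.prod_eq_one fun j _ => stmt11dd_integral _
  have hnorm : ∀ m m' (r : Fin k → ℝ), ‖Φ m r - Φ m' r‖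
      = ‖a (fun j => Real.sqrt (r j))‖ * |D m r - D m' r| := by
    intro m m' r
    simp only [hΦ]
    rw [← mul_sub, norm_mul, ← Complex.ofReal_sub, Complex.norm_real, Real.norm_eq_abs]
  have hΦbound : ∀ m, ∀ᵐ r : Fin k → ℝ ∂volume, ‖Φ m r‖ ≤ C * D m r := by
    intro m
    filter_upwards [hae] with r hr
    have he : ‖Φ m r‖ = ‖a (fun j => Real.sqrt (r j))‖ * D m r := by
      simp only [hΦ, norm_mul, Complex.norm_real, Real.norm_eq_abs,
        abs_of_nonneg (hD_nonneg m r)]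
    rw [he]
    by_cases hDz : D m r = 0
    · rw [hDz]; simp
    · have hpos : ∀ j, 0 < r j := by
        intro j
        by_contra hj
        exact hDz (Finset.prod_eq_zero (Finset.mem_univ j) (stmt11dd_eq_zero hj))
      exact mul_le_mul_of_nonneg_right (hr hpos) (hD_nonneg m r)
  have hΦint : ∀ m, Integrable (Φ m) := by
    intro m
    exact Integrable.mono' ((hDint m).const_mul C) (hΦmeas m) (hΦbound m)
  -- boundedness
  have hbdd : ∀ m, ‖γ m‖ ≤ C := by
    intro m
    rw [hA m]
    calc ‖∫ r, Φ m r‖ ≤ ∫ r, ‖Φ m r‖ := norm_integral_le_integral_norm _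
      _ ≤ ∫ r, C * D m r := integral_mono_ae (hΦint m).norm ((hDint m).const_mul C)
          (by filter_upwards [hΦbound m] with r h using h)
      _ = C * ∫ r, D m r := integral_const_mul _ _
      _ = C := by rw [hDintegral m, mul_one]
  -- Step B : single coordinate
  have hB : ∀ (μ : Fin k → ℕ) (i : Fin k) (v : ℕ),
      ‖γ μ - γ (Function.update μ i v)‖
        ≤ K * C * |Real.sqrt (μ i : ℝ) - Real.sqrt (v : ℝ)| := by
    intro μ i v
    set μ' := Function.update μ i v with hμ'
    have hPagree : ∀ j, j ≠ i → P μ' j = P μ j := by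
      intro j hj; simp only [hP, hμ', Function.update_of_ne hj]
    set g : Fin k → ℝ → ℝ := fun j => if j = i
      then (fun x => |stmt11dd (P μ i) x - stmt11dd (P μ' i) x|)
      else stmt11dd (P μ j) with hg
    have hg_nonneg : ∀ j x, 0 ≤ g j x := by
      intro j x
      by_cases hj : j = i
      · subst hj; simp only [hg, if_pos rfl]; exact abs_nonneg _
      · simp only [hg, if_neg hj]; exact stmt11dd_nonneg _ _
    have hgint : ∀ j, Integrable (g j) := by
      intro j
      by_cases hj : j = i
      · subst hj; simp only [hg, if_pos rfl]
        exact ((stmt11dd_integrable _).sub (stmt11dd_integrable _)).abs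
      · simp only [hg, if_neg hj]; exact stmt11dd_integrable _
    have hgprod : ∀ r : Fin k → ℝ, |D μ r - D μ' r| = ∏ j, g j (r j) := by
      intro r
      have e1 : D μ r = (∏ j ∈ Finset.univ.erase i, stmt11dd (P μ j) (r j))
          * stmt11dd (P μ i) (r i) := (Finset.prod_erase_mul _ _ (Finset.mem_univ i)).symm
      have e2 : D μ' r = (∏ j ∈ Finset.univ.erase i, stmt11dd (P μ j) (r j))
          * stmt11dd (P μ' i) (r i) := by
        rw [show D μ' r = (∏ j ∈ Finset.univ.erase i, stmt11dd (P μ' j) (r j))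
            * stmt11dd (P μ' i) (r i) from (Finset.prod_erase_mul _ _ (Finset.mem_univ i)).symm]
        congr 1
        exact Finset.prod_congr rfl fun j hj => by
          rw [hPagree j (Finset.ne_of_mem_erase hj)]
      have e3 : ∏ j, g j (r j) = (∏ j ∈ Finset.univ.erase i, stmt11dd (P μ j) (r j))
          * |stmt11dd (P μ i) (r i) - stmt11dd (P μ' i) (r i)| := by
        rw [← Finset.prod_erase_mul _ _ (Finset.mem_univ i)]
        congr 1
        · exact Finset.prod_congr rfl fun j hj => by
            simp only [hg, if_neg (Finset.ne_of_mem_erase hj)]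
        · simp only [hg, if_pos rfl]
      rw [e1, e2, e3, ← mul_sub, abs_mul,
        abs_of_nonneg (Finset.prod_nonneg fun j _ => stmt11dd_nonneg _ _)]
    have hbnd : ∀ᵐ r : Fin k → ℝ ∂volume, ‖Φ μ r - Φ μ' r‖ ≤ C * ∏ j, g j (r j) := by
      filter_upwards [hae] with r hr
      rw [hnorm μ μ' r, hgprod r]
      by_cases hz : (∏ j, g j (r j)) = 0
      · rw [hz]; simp
      · have hpos : ∀ j, 0 < r j := by
          intro j
          by_contra hj
          apply hz
          apply Finset.prod_eq_zero (Finset.mem_univ j)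
          by_cases hji : j = i
          · subst hji
            simp only [hg, if_pos rfl, stmt11dd_eq_zero hj]
            simp
          · simp only [hg, if_neg hji]
            exact stmt11dd_eq_zero hj
        exact mul_le_mul_of_nonneg_right (hr hpos)
          (Finset.prod_nonneg fun j _ => hg_nonneg j (r j))
    have hgprod_int : ∫ r : Fin k → ℝ, ∏ j, g j (r j)
        = ∫ x, |stmt11dd (P μ i) x - stmt11dd (P μ' i) x| := by
      rw [MeasureTheory.integral_fintype_prod_volume_eq_prod g,
        ← Finset.prod_erase_mul _ _ (Finset.mem_univ i)]
      have h1 : ∀ j ∈ Finset.univ.erase i, (∫ x, g j x) = 1 := by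
        intro j hj
        simp only [hg, if_neg (Finset.ne_of_mem_erase hj)]
        exact stmt11dd_integral _
      rw [Finset.prod_congr rfl h1, Finset.prod_const_one, one_mul]
      simp only [hg, if_pos rfl]
    have hshift : |Real.sqrt ((P μ i : ℕ) : ℝ) - Real.sqrt ((P μ' i : ℕ) : ℝ)|
        ≤ |Real.sqrt (μ i : ℝ) - Real.sqrt (v : ℝ)| := by
      have h1 : P μ i = μ i + (n i - 1) := by simp only [hP]; have := hn i; omega
      have h2 : P μ' i = v + (n i - 1) := by
        simp only [hP, hμ', Function.update_self]; have := hn i; omega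
      rw [h1, h2]
      push_cast
      exact stmt11_sqrt_shift (μ i) v (n i - 1)
    calc ‖γ μ - γ μ'‖ = ‖∫ r, (Φ μ r - Φ μ' r)‖ := by
          rw [hA μ, hA μ', ← integral_sub (hΦint μ) (hΦint μ')]
      _ ≤ ∫ r, ‖Φ μ r - Φ μ' r‖ := norm_integral_le_integral_norm _
      _ ≤ ∫ r : Fin k → ℝ, C * ∏ j, g j (r j) := integral_mono_ae
          ((hΦint μ).sub (hΦint μ')).norm
          ((Integrable.fintype_prod hgint).const_mul C) hbnd
      _ = C * ∫ x, |stmt11dd (P μ i) x - stmt11dd (P μ' i) x| := by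
          rw [integral_const_mul, hgprod_int]
      _ ≤ C * (K * |Real.sqrt ((P μ i : ℕ) : ℝ) - Real.sqrt ((P μ' i : ℕ) : ℝ)|) :=
          mul_le_mul_of_nonneg_left (stmt11_chain _ _) hC0
      _ ≤ K * C * |Real.sqrt (μ i : ℝ) - Real.sqrt (v : ℝ)| := by
          have := mul_le_mul_of_nonneg_left (mul_le_mul_of_nonneg_left hshift hK0) hC0
          calc C * (K * |Real.sqrt ((P μ i : ℕ) : ℝ) - Real.sqrt ((P μ' i : ℕ) : ℝ)|)
              ≤ C * (K * |Real.sqrt (μ i : ℝ) - Real.sqrt (v : ℝ)|) := this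
            _ = K * C * |Real.sqrt (μ i : ℝ) - Real.sqrt (v : ℝ)| := by ring
  -- Lipschitz estimate via telescoping
  have hLip : ∀ m m' : Fin k → ℕ,
      ‖γ m - γ m'‖ ≤ K * C * ∑ i, |Real.sqrt (m i : ℝ) - Real.sqrt (m' i : ℝ)| := by
    intro m m'
    set h : ℕ → (Fin k → ℕ) := fun t j => if (j : ℕ) < t then m' j else m j with hh
    have h0 : h 0 = m := by funext j; simp [hh]
    have hk : h k = m' := by funext j; simp [hh, j.isLt]
    have hstep : ∀ t : ℕ, ∀ ht : t < k,
        h (t+1) = Function.update (h t) ⟨t, ht⟩ (m' ⟨t, ht⟩) := by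
      intro t ht
      funext j
      by_cases hj : j = (⟨t, ht⟩ : Fin k)
      · subst hj; simp [hh, Function.update_self]
      · have hjt : (j:ℕ) ≠ t := fun hc => hj (Fin.ext hc)
        rw [Function.update_of_ne hj]
        simp only [hh]
        by_cases hlt : (j:ℕ) < t
        · rw [if_pos hlt, if_pos (by omega)]
        · rw [if_neg hlt, if_neg (by omega)]
    have hbase : ∀ t (ht : t < k), h t (⟨t, ht⟩ : Fin k) = m ⟨t, ht⟩ := by
      intro t ht; simp [hh]
    set G : ℕ → ℝ := fun t => if ht : t < k
      then |Real.sqrt (m (⟨t, ht⟩ : Fin k) : ℝ) - Real.sqrt (m' (⟨t, ht⟩ : Fin k) : ℝ)|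
      else 0 with hG
    have htel : γ m - γ m' = ∑ t ∈ Finset.range k, (γ (h t) - γ (h (t+1))) := by
      rw [Finset.sum_range_sub' (fun t => γ (h t)) k, h0, hk]
    rw [htel]
    calc ‖∑ t ∈ Finset.range k, (γ (h t) - γ (h (t+1)))‖
        ≤ ∑ t ∈ Finset.range k, ‖γ (h t) - γ (h (t+1))‖ := norm_sum_le _ _
      _ ≤ ∑ t ∈ Finset.range k, K * C * G t := by
          apply Finset.sum_le_sum
          intro t htmem
          have ht : t < k := Finset.mem_range.1 htmem
          rw [hstep t ht]
          have := hB (h t) ⟨t, ht⟩ (m' ⟨t, ht⟩)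
          rw [hbase t ht] at this
          simpa [hG, dif_pos ht] using this
      _ = K * C * ∑ i, |Real.sqrt (m i : ℝ) - Real.sqrt (m' i : ℝ)| := by
          rw [← Finset.mul_sum]
          congr 1
          rw [← Fin.sum_univ_eq_sum_range G k]
          exact Finset.sum_congr rfl fun i _ => by simp [hG, i.isLt]
  refine ⟨fun m m' => hLip m m', ⟨C, hbdd⟩, ?_⟩
  intro ε hε
  have hKC : 0 ≤ K * C := mul_nonneg hK0 hC0
  refine ⟨ε / (K * C + 1), by positivity, ?_⟩
  intro m m' hlt
  have h1 : ‖γ m - γ m'‖ ≤ K * C * ∑ i, |Real.sqrt (m i : ℝ) - Real.sqrt (m' i : ℝ)| :=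
    hLip m m'
  have h2 : K * C * ∑ i, |Real.sqrt (m i : ℝ) - Real.sqrt (m' i : ℝ)|
      ≤ K * C * (ε / (K * C + 1)) := by
    apply mul_le_mul_of_nonneg_left hlt.le hKC
  have h3 : K * C * (ε / (K * C + 1)) < ε := by
    have hpos : (0:ℝ) < K * C + 1 := by linarith
    have heq : K * C * (ε / (K * C + 1)) = (K * C / (K * C + 1)) * ε := by ring
    rw [heq]
    have hlt1 : K * C / (K * C + 1) < 1 := (div_lt_one hpos).2 (by linarith)
    calc (K * C / (K * C + 1)) * ε < 1 * ε :=
        mul_lt_mul_of_pos_right hlt1 hε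
      _ = ε := one_mul ε
  exact lt_of_le_of_lt (le_trans h1 h2) h3
end

section
/- Define g : ℕ₀ × (0,∞) → ℝ by g(m,r) = 2r^{2m+1}e^{−r²}/m! and h : ℝ → ℝ by h(x) = √(2/π) e^{−2x²}. Then lim_{m→∞} ∫₀^∞ |g(m,r) − h(√m − r)| dr = 0. -/
open MeasureTheory Real Set Filter Topology

noncomputable def gG (m : ℕ) (r : ℝ) : ℝ := 2 * r ^ (2*m+1) * Real.exp (-r^2) / (m.factorial : ℝ)

lemma cast_lt (m : ℕ) : (-1:ℝ) < 2*m+1 := by nlinarith [Nat.cast_nonneg (α := ℝ) m]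

lemma pow_eq (m : ℕ) (x : ℝ) (hx : x ∈ Ioi (0:ℝ)) :
    x ^ (2*m+1 : ℝ) * Real.exp (-x ^ (2:ℝ)) = x ^ (2*m+1) * Real.exp (-x^2) := by
  rw [← Real.rpow_natCast x (2*m+1), ← Real.rpow_natCast x 2]
  push_cast; norm_num

lemma gG_intOn (m : ℕ) : IntegrableOn (gG m) (Ioi 0) := by
  have h := integrableOn_rpow_mul_exp_neg_rpow (p := 2) (s := (2*m+1 : ℝ))
    (by have := cast_lt m; norm_num at this ⊢; linarith) (by norm_num)
  have h2 : IntegrableOn (fun x : ℝ => x ^ (2*m+1) * Real.exp (-x^2)) (Ioi 0) :=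
    h.congr_fun (fun x hx => pow_eq m x hx) measurableSet_Ioi
  have h3 : IntegrableOn (fun x : ℝ => 2 * (x ^ (2*m+1) * Real.exp (-x^2)) / (m.factorial:ℝ))
      (Ioi 0) := (h2.const_mul 2).div_const (m.factorial : ℝ)
  refine h3.congr_fun (fun x _ => ?_) measurableSet_Ioi
  simp [gG]; ring

lemma gG_integral (m : ℕ) : ∫ r in Ioi (0:ℝ), gG m r = 1 := by
  have h := integral_rpow_mul_exp_neg_rpow (p := 2) (q := (2*m+1 : ℝ)) (by norm_num)
    (by have := cast_lt m; norm_num at this ⊢; linarith)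
  have h2 : ∫ x in Ioi (0:ℝ), x ^ (2*m+1 : ℝ) * Real.exp (-x ^ (2:ℝ)) =
      ∫ x in Ioi (0:ℝ), x ^ (2*m+1) * Real.exp (-x^2) :=
    setIntegral_congr_fun measurableSet_Ioi (fun x hx => pow_eq m x hx)
  rw [h2] at h
  have hg : Real.Gamma (((2*m+1:ℝ) + 1)/2) = (m.factorial : ℝ) := by
    rw [show ((2*(m:ℕ)+1:ℝ) + 1)/2 = (m:ℝ)+1 by push_cast; ring]
    exact_mod_cast Real.Gamma_nat_eq_factorial m
  rw [hg] at h
  have hfact : (m.factorial : ℝ) ≠ 0 := by positivity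
  calc ∫ r in Ioi (0:ℝ), gG m r
      = ∫ r in Ioi (0:ℝ), (2 / (m.factorial:ℝ)) * (r ^ (2*m+1) * Real.exp (-r^2)) := by
        refine setIntegral_congr_fun measurableSet_Ioi (fun x _ => ?_); simp [gG]; ring
    _ = (2 / (m.factorial:ℝ)) * ∫ r in Ioi (0:ℝ), r ^ (2*m+1) * Real.exp (-r^2) :=
        integral_const_mul _ _
    _ = 1 := by rw [h]; field_simp

noncomputable def Hh (x : ℝ) : ℝ := Real.sqrt (2/π) * Real.exp (-2 * x^2)

lemma Hh_nonneg (x : ℝ) : 0 ≤ Hh x := by unfold Hh; positivity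

lemma Hh_integrable : Integrable Hh :=
  (integrable_exp_neg_mul_sq (by norm_num : (0:ℝ) < 2)).const_mul _

lemma Hh_integral : ∫ x : ℝ, Hh x = 1 := by
  unfold Hh
  rw [integral_const_mul, integral_gaussian, ← Real.sqrt_mul (by positivity)]
  rw [show (2/π) * (π/2) = 1 by field_simp]
  exact Real.sqrt_one

noncomputable def gG' (m : ℕ) : ℝ → ℝ := Set.indicator (Ioi (0:ℝ)) (gG m)

noncomputable def Ff (m : ℕ) (x : ℝ) : ℝ := gG' m (x + Real.sqrt m)

lemma gG'_integrable (m : ℕ) : Integrable (gG' m) :=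
  (gG_intOn m).integrable_indicator measurableSet_Ioi

lemma gG'_nonneg (m : ℕ) (x : ℝ) : 0 ≤ gG' m x := by
  unfold gG'
  apply Set.indicator_nonneg
  intro r hr
  have : (0:ℝ) < r := hr
  unfold gG; positivity

lemma Ff_integrable (m : ℕ) : Integrable (Ff m) :=
  ((measurePreserving_add_right volume _).integrable_comp_emb
    (measurableEmbedding_addRight _)).mpr (gG'_integrable m)

lemma Ff_nonneg (m : ℕ) (x : ℝ) : 0 ≤ Ff m x := gG'_nonneg m _

lemma Ff_integral (m : ℕ) : ∫ x : ℝ, Ff m x = 1 := by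
  unfold Ff
  rw [integral_add_right_eq_self (gG' m)]
  unfold gG'
  rw [integral_indicator measurableSet_Ioi]
  exact gG_integral m

-- Taylor bound for log
lemma log_taylor {t : ℝ} (h : |t| < 1) :
    |2 * Real.log (1+t) - 2*t + t^2| ≤ 2 * |t|^3 / (1 - |t|) := by
  have h2 := Real.abs_log_sub_add_sum_range_le (x := -t) (by rwa [abs_neg]) 2
  simp [Finset.sum_range_succ] at h2
  have : 2 * Real.log (1+t) - 2*t + t^2 = 2 * (-t + t^2/2 + Real.log (1+t)) := by ring
  rw [this, abs_mul, abs_two]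
  calc 2 * |(-t + t^2/2 + Real.log (1+t))| ≤ 2 * (|t|^3/(1-|t|)) := by
        apply mul_le_mul_of_nonneg_left _ (by norm_num)
        convert h2 using 2
        · rfl
        · ring
    _ = 2 * |t|^3 / (1 - |t|) := by ring

lemma sqrt_atTop' : Tendsto (fun m : ℕ => Real.sqrt m) atTop atTop := by
  refine tendsto_atTop_atTop.mpr (fun b => ⟨⌈b*b⌉₊, fun m hm => ?_⟩)
  rcases le_or_gt b 0 with h | h
  · exact h.trans (Real.sqrt_nonneg _)
  · rw [show b = Real.sqrt (b*b) by rw [Real.sqrt_mul_self h.le]]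
    apply Real.sqrt_le_sqrt
    exact le_trans (Nat.le_ceil _) (by exact_mod_cast hm)

lemma tendsto_div_sqrt (x : ℝ) :
    Tendsto (fun m : ℕ => x / Real.sqrt m) atTop (𝓝 0) :=
  Tendsto.div_atTop tendsto_const_nhds sqrt_atTop'

-- the exponent tends to 0
lemma exponent_tendsto (x : ℝ) :
    Tendsto (fun m : ℕ => ((2*m+1 : ℕ) : ℝ) * Real.log (1 + x / Real.sqrt m)
      - 2 * Real.sqrt m * x + x^2) atTop (𝓝 0) := by
  have ht := tendsto_div_sqrt x
  have hlog : Tendsto (fun m : ℕ => Real.log (1 + x / Real.sqrt m)) atTop (𝓝 0) := by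
    have : Tendsto (fun m : ℕ => 1 + x / Real.sqrt m) atTop (𝓝 1) := by
      simpa using tendsto_const_nhds.add ht
    have hc : ContinuousAt Real.log 1 := Real.continuousAt_log (by norm_num)
    have h' := hc.tendsto.comp this
    rw [Real.log_one] at h'
    exact h'
  have hmain : Tendsto (fun m : ℕ => (m:ℝ) *
      (2 * Real.log (1 + x / Real.sqrt m) - 2*(x / Real.sqrt m) + (x / Real.sqrt m)^2))
      atTop (𝓝 0) := by
    apply squeeze_zero_norm' (a := fun m : ℕ => 4 * |x|^3 / Real.sqrt m)
    · have h1 : ∀ᶠ m : ℕ in atTop, |x / Real.sqrt m| ≤ 1/2 := by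
        have h0 : Tendsto (fun m : ℕ => |x / Real.sqrt m|) atTop (𝓝 0) := by simpa using ht.abs
        exact h0.eventually (eventually_le_nhds (by norm_num : (0:ℝ) < 1/2))
      have h2 : ∀ᶠ m : ℕ in atTop, (1:ℝ) ≤ m := by
        exact_mod_cast eventually_ge_atTop 1
      filter_upwards [h1, h2] with m hm hm1
      have hsm : (0:ℝ) < Real.sqrt m := Real.sqrt_pos.mpr (by linarith)
      have habs : |x / Real.sqrt m| < 1 := lt_of_le_of_lt hm (by norm_num)
      have hE := log_taylor habs
      set t := x / Real.sqrt m with htdef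
      have hb : 2 * |t|^3 / (1 - |t|) ≤ 4 * |t|^3 := by
        rw [div_le_iff₀ (by linarith)]
        nlinarith [abs_nonneg t, pow_nonneg (abs_nonneg t) 3]
      have : ‖(m:ℝ) * (2 * Real.log (1+t) - 2*t + t^2)‖ ≤ (m:ℝ) * (4 * |t|^3) := by
        rw [norm_mul, Real.norm_natCast]
        exact mul_le_mul_of_nonneg_left (le_trans hE hb) (Nat.cast_nonneg m)
      refine this.trans (le_of_eq ?_)
      have h3 : |t| = |x| / Real.sqrt m := by rw [htdef, abs_div, abs_of_pos hsm]
      rw [h3, div_pow]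
      have hcube : (Real.sqrt m)^3 = (m:ℝ) * Real.sqrt m := by
        rw [pow_succ, Real.sq_sqrt (by positivity)]
      rw [hcube]
      have hm0 : (m:ℝ) ≠ 0 := by positivity
      field_simp
    · exact Tendsto.div_atTop tendsto_const_nhds sqrt_atTop'
  have hsum := hmain.add hlog
  rw [add_zero] at hsum
  refine Tendsto.congr' ?_ hsum
  filter_upwards [eventually_ge_atTop 1] with m hm1
  have hsm : (0:ℝ) < Real.sqrt m :=
    Real.sqrt_pos.mpr (by exact_mod_cast Nat.pos_of_ne_zero (by omega))
  have hm2 : Real.sqrt m * Real.sqrt m = (m:ℝ) := Real.mul_self_sqrt (Nat.cast_nonneg m)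
  have hm0 : (m:ℝ) ≠ 0 := by positivity
  have e2 : (m:ℝ) * (x / Real.sqrt m) = Real.sqrt m * x := by
    conv_lhs => rw [← hm2]
    field_simp
    rw [Real.sqrt_sq hsm.le]; ring
  have e1 : (m:ℝ) * (x / Real.sqrt m)^2 = x^2 := by
    rw [div_pow, Real.sq_sqrt (Nat.cast_nonneg m)]
    field_simp
  push_cast
  linear_combination (-2 : ℝ) * e2 + e1

lemma Ff_eq {m : ℕ} (hm : 1 ≤ m) {x : ℝ} (hx : 0 < x + Real.sqrt m) :
    Ff m x = (Real.sqrt π / Stirling.stirlingSeq m) *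
      Real.exp (((2*m+1 : ℕ):ℝ) * Real.log (1 + x / Real.sqrt m)
        - 2 * Real.sqrt m * x + x^2) * Hh x := by
  obtain ⟨k, rfl⟩ : ∃ k, m = k + 1 := ⟨m - 1, by omega⟩
  set m' := k + 1 with hm'
  set s := Real.sqrt m' with hsdef
  have hs : 0 < s := Real.sqrt_pos.mpr (by positivity)
  have hss : s * s = (m' : ℝ) := Real.mul_self_sqrt (by positivity)
  have hS : 0 < Stirling.stirlingSeq m' := Stirling.stirlingSeq'_pos k
  set S := Stirling.stirlingSeq m' with hSdef
  have h1x : 0 < 1 + x / s := by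
    have : 1 + x / s = (x + s) / s := by field_simp; ring
    rw [this]; exact div_pos hx hs
  have hFf : Ff m' x = 2 * (x+s) ^ (2*m'+1) * Real.exp (-(x+s)^2) / (m'.factorial : ℝ) := by
    unfold Ff gG' gG
    rw [Set.indicator_of_mem (by exact hx : x + s ∈ Ioi (0:ℝ))]
  have hfact : (m'.factorial : ℝ) = S * (Real.sqrt (2*m') * (((m':ℝ))/Real.exp 1)^m') := by
    rw [hSdef, Stirling.stirlingSeq]
    have h1 : Real.sqrt (2*m') ≠ 0 := by positivity
    have h2 : (((m':ℝ))/Real.exp 1)^m' ≠ 0 := by positivity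
    field_simp
  have hsqrt2m : Real.sqrt (2*(m':ℝ)) = Real.sqrt 2 * s := by
    rw [hsdef, Real.sqrt_mul (by norm_num)]
  have hpow : (((m':ℝ))/Real.exp 1)^m' = ((m':ℝ))^m' / Real.exp m' := by
    rw [div_pow, Real.exp_one_pow]
  have hxs : (x+s) ^ (2*m'+1) = ((m':ℝ))^m' * s * (1 + x/s) ^ (2*m'+1) := by
    have h1 : x + s = s * (1 + x/s) := by field_simp; ring
    rw [h1, mul_pow]
    have h2 : s ^ (2*m'+1) = ((m':ℝ))^m' * s := by
      rw [pow_succ, pow_mul, sq, hss]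
    rw [h2]
  have hexp : Real.exp (-(x+s)^2)
      = Real.exp (x^2 - 2*s*x) * Real.exp (-2*x^2) * (Real.exp m')⁻¹ := by
    rw [← Real.exp_neg, ← Real.exp_add, ← Real.exp_add]
    congr 1
    linear_combination -hss
  have hsqrtpi : Real.sqrt π * Real.sqrt (2/π) = Real.sqrt 2 := by
    rw [← Real.sqrt_mul Real.pi_nonneg, mul_div_cancel₀ _ (ne_of_gt Real.pi_pos)]
  have hexp2 : Real.exp (((2*m'+1 : ℕ):ℝ) * Real.log (1 + x / s) - 2 * s * x + x^2)
      = (1 + x/s) ^ (2*m'+1) * Real.exp (x^2 - 2*s*x) := by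
    rw [show ((2*m'+1 : ℕ):ℝ) * Real.log (1 + x / s) - 2 * s * x + x^2
        = ((2*m'+1 : ℕ):ℝ) * Real.log (1 + x / s) + (x^2 - 2*s*x) by ring]
    rw [Real.exp_add, Real.exp_nat_mul, Real.exp_log h1x]
  rw [hFf, hexp2, hfact, hsqrt2m, hpow, hxs, hexp]
  unfold Hh
  rw [Real.sqrt_div (by norm_num : (0:ℝ) ≤ 2) π]
  set P := (1 + x/s) ^ (2*m'+1) with hP
  set E1 := Real.exp (x^2 - 2*s*x)
  set E2 := Real.exp (-2*x^2)
  set M := ((m':ℝ))^m'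
  set Em := Real.exp (m':ℝ)
  have hS0 : S ≠ 0 := ne_of_gt hS
  have hsqrt2 : Real.sqrt 2 ≠ 0 := by positivity
  have hsqrtpi0 : Real.sqrt π ≠ 0 := by positivity
  have hexpm : Em ≠ 0 := Real.exp_ne_zero _
  have hmm : M ≠ 0 := by positivity
  have h2 : Real.sqrt 2 * Real.sqrt 2 = 2 := Real.mul_self_sqrt (by norm_num)
  rw [← h2]
  field_simp
  rw [Real.sqrt_sq (Real.sqrt_nonneg 2)]; ring

lemma Ff_tendsto (x : ℝ) : Tendsto (fun m : ℕ => Ff m x) atTop (𝓝 (Hh x)) := by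
  have hC : Tendsto (fun m : ℕ => Real.sqrt π / Stirling.stirlingSeq m) atTop (𝓝 1) := by
    have hpi : Real.sqrt π ≠ 0 := by positivity
    have := Tendsto.div (tendsto_const_nhds (x := Real.sqrt π))
      Stirling.tendsto_stirlingSeq_sqrt_pi hpi
    rw [div_self hpi] at this
    exact this
  have hE : Tendsto (fun m : ℕ => Real.exp (((2*m+1 : ℕ):ℝ) * Real.log (1 + x / Real.sqrt m)
      - 2 * Real.sqrt m * x + x^2)) atTop (𝓝 1) := by
    have := Real.continuous_exp.continuousAt.tendsto.comp (exponent_tendsto x)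
    rw [Real.exp_zero] at this
    exact this
  have hmul := (hC.mul hE).mul (tendsto_const_nhds (x := Hh x))
  rw [one_mul, one_mul] at hmul
  refine Tendsto.congr' ?_ hmul
  filter_upwards [eventually_ge_atTop 1, sqrt_atTop'.eventually_gt_atTop (-x)] with m h1 h2
  exact (Ff_eq h1 (by linarith)).symm

lemma abs_sub_eq_min (a b : ℝ) : |a - b| = a + b - 2 * min a b := by
  rcases le_total a b with h | h
  · rw [abs_of_nonpos (by linarith), min_eq_left h]; ring
  · rw [abs_of_nonneg (by linarith), min_eq_right h]; ring

lemma min_integrable (m : ℕ) : Integrable (fun x => min (Ff m x) (Hh x)) := by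
  refine Integrable.mono Hh_integrable
    ((Ff_integrable m).aestronglyMeasurable.inf Hh_integrable.aestronglyMeasurable)
    (Eventually.of_forall fun x => ?_)
  rw [Real.norm_eq_abs, Real.norm_eq_abs, abs_of_nonneg (le_min (Ff_nonneg m x) (Hh_nonneg x)),
    abs_of_nonneg (Hh_nonneg x)]
  exact min_le_right _ _

lemma scheffe : Tendsto (fun m : ℕ => ∫ x : ℝ, |Ff m x - Hh x|) atTop (𝓝 0) := by
  have hmin : Tendsto (fun m : ℕ => ∫ x : ℝ, min (Ff m x) (Hh x)) atTop (𝓝 (∫ x : ℝ, Hh x)) := by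
    refine tendsto_integral_of_dominated_convergence Hh
      (fun m => (Ff_integrable m).aestronglyMeasurable.inf Hh_integrable.aestronglyMeasurable)
      Hh_integrable (fun m => Eventually.of_forall fun x => ?_)
      (Eventually.of_forall fun x => ?_)
    · rw [Real.norm_eq_abs, abs_of_nonneg (le_min (Ff_nonneg m x) (Hh_nonneg x))]
      exact min_le_right _ _
    · simpa [min_self] using (Ff_tendsto x).min (tendsto_const_nhds (x := Hh x))
  rw [Hh_integral] at hmin
  have key : ∀ m : ℕ, ∫ x : ℝ, |Ff m x - Hh x|
      = 2 - 2 * ∫ x : ℝ, min (Ff m x) (Hh x) := by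
    intro m
    have h1 : ∫ x : ℝ, |Ff m x - Hh x|
        = ∫ x : ℝ, (Ff m x + Hh x - 2 * min (Ff m x) (Hh x)) := by
      congr 1; funext x; exact abs_sub_eq_min _ _
    have hadd : Integrable (fun x : ℝ => Ff m x + Hh x) := (Ff_integrable m).add Hh_integrable
    have hmul2 : Integrable (fun x : ℝ => 2 * min (Ff m x) (Hh x)) :=
      (min_integrable m).const_mul 2
    rw [h1, integral_sub hadd hmul2, integral_add (Ff_integrable m) Hh_integrable,
      Ff_integral, Hh_integral, integral_const_mul]
    ring
  have : Tendsto (fun m : ℕ => 2 - 2 * ∫ x : ℝ, min (Ff m x) (Hh x)) atTop (𝓝 (2 - 2 * 1)) :=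
    tendsto_const_nhds.sub (hmin.const_mul 2)
  norm_num at this
  exact this.congr (fun m => (key m).symm)

/-- With `g(m,r) = 2 r^{2m+1} e^{−r²}/m!` and `h(x) = √(2/π) e^{−2x²}`,
`∫₀^∞ |g(m,r) − h(√m − r)| dr → 0` as `m → ∞`. -/
theorem stmt12 :
    Filter.Tendsto
      (fun m : ℕ => ∫ r in Set.Ioi (0 : ℝ),
        |2 * r ^ (2 * m + 1) * Real.exp (-r ^ 2) / (m.factorial : ℝ) -
          Real.sqrt (2 / Real.pi) * Real.exp (-2 * (Real.sqrt m - r) ^ 2)|)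
      Filter.atTop (nhds 0) := by
  have key : ∀ m : ℕ, (∫ r in Set.Ioi (0 : ℝ),
      |2 * r ^ (2 * m + 1) * Real.exp (-r ^ 2) / (m.factorial : ℝ) -
        Real.sqrt (2 / Real.pi) * Real.exp (-2 * (Real.sqrt m - r) ^ 2)|)
      ≤ ∫ x : ℝ, |Ff m x - Hh x| := by
    intro m
    set q : ℝ → ℝ := fun r => |gG m r - Hh (Real.sqrt m - r)| with hq
    have hq_eq : (∫ r in Set.Ioi (0 : ℝ),
        |2 * r ^ (2 * m + 1) * Real.exp (-r ^ 2) / (m.factorial : ℝ) -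
          Real.sqrt (2 / Real.pi) * Real.exp (-2 * (Real.sqrt m - r) ^ 2)|)
        = ∫ r in Set.Ioi (0:ℝ), q r := by
      refine setIntegral_congr_fun measurableSet_Ioi (fun r _ => ?_)
      simp [hq, gG, Hh]
    rw [hq_eq]
    -- q integrable on Ioi 0
    have hHcomp : Integrable (fun r : ℝ => Hh (Real.sqrt m - r)) := by
      have h1 : Integrable (fun r : ℝ => Hh (r + (- Real.sqrt m))) :=
        ((measurePreserving_add_right volume _).integrable_comp_emb
          (measurableEmbedding_addRight _)).mpr Hh_integrable
      refine h1.congr (Eventually.of_forall fun r => ?_)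
      show Hh (r + -Real.sqrt m) = Hh (Real.sqrt m - r)
      unfold Hh
      rw [show Real.sqrt m - r = -(r + -Real.sqrt m) by ring, neg_sq]
    have hq_int : IntegrableOn q (Ioi 0) :=
      ((gG_intOn m).sub hHcomp.integrableOn).abs
    -- rewrite as integral over ℝ of translated indicator
    rw [← integral_indicator measurableSet_Ioi,
      ← integral_add_right_eq_self (Set.indicator (Ioi (0:ℝ)) q) (Real.sqrt m)]
    have hint1 : Integrable (fun x : ℝ => Set.indicator (Ioi (0:ℝ)) q (x + Real.sqrt m)) :=
      ((measurePreserving_add_right volume _).integrable_comp_emb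
        (measurableEmbedding_addRight _)).mpr (hq_int.integrable_indicator measurableSet_Ioi)
    refine integral_mono hint1 ((Ff_integrable m).sub Hh_integrable).abs (fun x => ?_)
    by_cases hx : x + Real.sqrt m ∈ Ioi (0:ℝ)
    · rw [Set.indicator_of_mem hx]
      have h1 : Ff m x = gG m (x + Real.sqrt m) := by
        unfold Ff gG'
        rw [Set.indicator_of_mem hx]
      have h2 : Hh (Real.sqrt m - (x + Real.sqrt m)) = Hh x := by
        rw [show Real.sqrt m - (x + Real.sqrt m) = -x by ring]
        unfold Hh; rw [neg_sq]
      simp only [hq]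
      rw [h2, ← h1]
    · rw [Set.indicator_of_notMem hx]
      exact abs_nonneg _
  have hnn : ∀ m : ℕ, 0 ≤ ∫ r in Set.Ioi (0 : ℝ),
      |2 * r ^ (2 * m + 1) * Real.exp (-r ^ 2) / (m.factorial : ℝ) -
        Real.sqrt (2 / Real.pi) * Real.exp (-2 * (Real.sqrt m - r) ^ 2)| :=
    fun m => integral_nonneg (fun r => abs_nonneg _)
  exact squeeze_zero hnn key scheffe
end
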